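/- arXiv:1806.06903 — 3 statements merged into one kernel-verified Lean document; each statement's English description precedes it below -/
import Mathlib

section
/- Suppose 1/n ≪ c ≪ α ≪ β ≪ ξ ≪ η < 1 and G is an oriented graph on n vertices with δ⁰(G) ≥ (1/2 - c)n. If A ⊆ V(G) with |A| > ηn and cyc(A, A, Ā) ≤ αn³, then the set S of vertices outside A that lie in neither the strong β-out-neighborhood nor the strong β-in-neighborhood of A has size at most βn. -/
open Finset
open scoped Classical

/-- An oriented graph: no loops and no pair of antiparallel edges. -/
def IsOriented {n : ℕ} (G : Fin n → Fin n → Prop) : Prop :=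
  (∀ v, ¬ G v v) ∧ ∀ u v : Fin n, G u v → ¬ G v u

/-- `d⁺(v, A)`: number of out-neighbors of `v` in `A`. -/
noncomputable def outDegOn {n : ℕ} (G : Fin n → Fin n → Prop) (v : Fin n)
    (A : Finset (Fin n)) : ℕ :=
  (A.filter fun u => G v u).card

/-- `d⁻(v, A)`: number of in-neighbors of `v` in `A`. -/
noncomputable def inDegOn {n : ℕ} (G : Fin n → Fin n → Prop) (v : Fin n)
    (A : Finset (Fin n)) : ℕ :=
  (A.filter fun u => G u v).card

/-- outdegree `d⁺(v)`. -/
noncomputable def outDeg {n : ℕ} (G : Fin n → Fin n → Prop) (v : Fin n) : ℕ :=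
  outDegOn G v univ

/-- indegree `d⁻(v)`. -/
noncomputable def inDeg {n : ℕ} (G : Fin n → Fin n → Prop) (v : Fin n) : ℕ :=
  inDegOn G v univ

/-- The minimum semidegree condition `δ⁰(G) ≥ b`. -/
def MinSemidegreeGE {n : ℕ} (G : Fin n → Fin n → Prop) (b : ℝ) : Prop :=
  ∀ v : Fin n, b ≤ (outDeg G v : ℝ) ∧ b ≤ (inDeg G v : ℝ)

/-- `e⁺(A, B)`: number of edges directed from `A` to `B`. -/
noncomputable def eOut {n : ℕ} (G : Fin n → Fin n → Prop) (A B : Finset (Fin n)) : ℕ :=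
  ∑ a ∈ A, outDegOn G a B

/-- `s` is the vertex set of a cyclic triangle. -/
def IsCycTri {n : ℕ} (G : Fin n → Fin n → Prop) (s : Finset (Fin n)) : Prop :=
  ∃ a b c : Fin n, G a b ∧ G b c ∧ G c a ∧ s = {a, b, c}

/-- `s` is the vertex set of a transitive triangle. -/
def IsTrnTri {n : ℕ} (G : Fin n → Fin n → Prop) (s : Finset (Fin n)) : Prop :=
  ∃ a b c : Fin n, G a b ∧ G b c ∧ G a c ∧ s = {a, b, c}

/-- `cyc(A)`: number of cyclic triangles with all vertices in `A`. -/
noncomputable def cycIn {n : ℕ} (G : Fin n → Fin n → Prop) (A : Finset (Fin n)) : ℕ :=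
  ((A.powersetCard 3).filter fun s => IsCycTri G s).card

/-- `trn(A)`: number of transitive triangles with all vertices in `A`. -/
noncomputable def trnIn {n : ℕ} (G : Fin n → Fin n → Prop) (A : Finset (Fin n)) : ℕ :=
  ((A.powersetCard 3).filter fun s => IsTrnTri G s).card

/-- `cyc(A, B, C)`: number of cyclic triangles with one vertex in each of `A`, `B`, `C`
(in the sense of some labeling of its vertex set). -/
noncomputable def cyc3 {n : ℕ} (G : Fin n → Fin n → Prop) (A B C : Finset (Fin n)) : ℕ :=
  (((univ : Finset (Fin n)).powersetCard 3).filter fun s =>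
    IsCycTri G s ∧ ∃ x ∈ A, ∃ y ∈ B, ∃ z ∈ C, s = ({x, y, z} : Finset (Fin n))).card

/-- A cyclic triangle tiling: a collection of vertex-disjoint cyclic triangles. -/
def IsCycTiling {n : ℕ} (G : Fin n → Fin n → Prop) (C : Finset (Finset (Fin n))) : Prop :=
  (∀ s ∈ C, IsCycTri G s) ∧ ∀ s ∈ C, ∀ t ∈ C, s ≠ t → Disjoint s t

/-- A cyclic triangle factor: a tiling covering every vertex. -/
def IsCycFactor {n : ℕ} (G : Fin n → Fin n → Prop) (C : Finset (Finset (Fin n))) : Prop :=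
  IsCycTiling G C ∧ C.biUnion id = univ

/-- `W` can be perfectly covered by vertex-disjoint cyclic triangles
(i.e. `H(G)[W]` has a perfect matching). -/
def HasCycPM {n : ℕ} (G : Fin n → Fin n → Prop) (W : Finset (Fin n)) : Prop :=
  ∃ C : Finset (Finset (Fin n)), IsCycTiling G C ∧ C.biUnion id = W

/-- The number of `(H(G), x, y)`-linking `(3ℓ-1)`-sets. -/
noncomputable def linkCount {n : ℕ} (G : Fin n → Fin n → Prop) (ℓ : ℕ) (x y : Fin n) : ℕ :=
  (((univ : Finset (Fin n)).powersetCard (3 * ℓ - 1)).filter fun S =>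
    x ∉ S ∧ y ∉ S ∧ HasCycPM G (insert x S) ∧ HasCycPM G (insert y S)).card


section stmt12helpers
variable {n : ℕ} {G : Fin n → Fin n → Prop}

/-- product-filter card, summed over first coordinate -/
private lemma cardPF1 (s t : Finset (Fin n)) (P : Fin n → Fin n → Prop) :
    ((s ×ˢ t).filter fun p => P p.1 p.2).card = ∑ u ∈ s, (t.filter fun v => P u v).card := by
  rw [Finset.card_filter, Finset.sum_product]
  refine Finset.sum_congr rfl fun u _ => ?_
  rw [Finset.card_filter]

/-- product-filter card, summed over second coordinate -/
private lemma cardPF2 (s t : Finset (Fin n)) (P : Fin n → Fin n → Prop) :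
    ((s ×ˢ t).filter fun p => P p.1 p.2).card = ∑ v ∈ t, (s.filter fun u => P u v).card := by
  rw [Finset.card_filter, Finset.sum_product_right]
  refine Finset.sum_congr rfl fun u _ => ?_
  rw [Finset.card_filter]

private lemma sumIte (s : Finset (Fin n)) (P : Fin n → Prop) (r : ℝ) :
    ∑ u ∈ s, (if P u then r else 0) = ((s.filter P).card : ℝ) * r := by
  rw [← Finset.sum_filter, Finset.sum_const, nsmul_eq_mul]

private lemma degOn_add_le (v : Fin n) (B : Finset (Fin n))
    (hasym : ∀ a b : Fin n, G a b → ¬ G b a) :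
    outDegOn G v B + inDegOn G v B ≤ B.card := by
  rw [outDegOn, inDegOn, ← Finset.card_union_of_disjoint]
  · exact Finset.card_le_card
      (Finset.union_subset (Finset.filter_subset _ _) (Finset.filter_subset _ _))
  · rw [Finset.disjoint_left]
    intro a ha hb
    exact hasym v a (Finset.mem_filter.1 ha).2 (Finset.mem_filter.1 hb).2

private lemma degOn_union (v : Fin n) {B C : Finset (Fin n)} (h : Disjoint B C) :
    inDegOn G v (B ∪ C) = inDegOn G v B + inDegOn G v C := by
  rw [inDegOn, Finset.filter_union, Finset.card_union_of_disjoint, inDegOn, inDegOn]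
  exact Finset.disjoint_filter_filter h

private lemma inDegOn_mono (v : Fin n) {B C : Finset (Fin n)} (h : B ⊆ C) :
    inDegOn G v B ≤ inDegOn G v C :=
  Finset.card_le_card (Finset.filter_subset_filter _ h)

private lemma deg_split (v : Fin n) (B : Finset (Fin n)) :
    outDeg G v = outDegOn G v B + outDegOn G v Bᶜ := by
  rw [outDeg, outDegOn, outDegOn, outDegOn, ← Finset.card_union_of_disjoint
    (Finset.disjoint_filter_filter disjoint_compl_right), ← Finset.filter_union,
    Finset.union_compl]

private lemma deg_split' (v : Fin n) (B : Finset (Fin n)) :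
    inDeg G v = inDegOn G v B + inDegOn G v Bᶜ := by
  rw [inDeg, inDegOn, inDegOn, inDegOn, ← Finset.card_union_of_disjoint
    (Finset.disjoint_filter_filter disjoint_compl_right), ← Finset.filter_union,
    Finset.union_compl]

/-- near-adjacency: every vertex is adjacent to all but `n - d⁺ - d⁻` vertices of `B`. -/
private lemma adjLB (hasym : ∀ a b : Fin n, G a b → ¬ G b a) (v : Fin n) (B : Finset (Fin n)) :
    B.card + outDeg G v + inDeg G v ≤ outDegOn G v B + inDegOn G v B + n := by
  classical
  set N : Finset (Fin n) := univ.filter (fun u => ¬ G v u ∧ ¬ G u v) with hN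
  have h1 : B.card ≤ outDegOn G v B + inDegOn G v B + N.card := by
    have hsplit : B.card = (B.filter fun u => G v u).card + (B.filter fun u => ¬ G v u).card :=
      (Finset.card_filter_add_card_filter_not _).symm
    have hsub : (B.filter fun u => ¬ G v u) ⊆ (B.filter fun u => G u v) ∪ N := by
      intro a ha
      rw [Finset.mem_filter] at ha
      by_cases hav : G a v
      · exact Finset.mem_union_left _ (Finset.mem_filter.2 ⟨ha.1, hav⟩)
      · exact Finset.mem_union_right _ (Finset.mem_filter.2 ⟨Finset.mem_univ a, ha.2, hav⟩)
    calc B.card = (B.filter fun u => G v u).card + (B.filter fun u => ¬ G v u).card := hsplit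
      _ ≤ outDegOn G v B + ((B.filter fun u => G u v).card + N.card) := by
          refine Nat.add_le_add le_rfl ?_
          exact le_trans (Finset.card_le_card hsub) (Finset.card_union_le _ _)
      _ = outDegOn G v B + inDegOn G v B + N.card := by rw [outDegOn, inDegOn]; ring
  have h2 : N.card + outDeg G v + inDeg G v ≤ n := by
    have hd : Disjoint (univ.filter fun u => G v u)
        ((univ.filter fun u => G u v) ∪ N) := by
      rw [Finset.disjoint_union_right]
      constructor
      · rw [Finset.disjoint_left]
        intro a ha hb
        exact hasym v a (Finset.mem_filter.1 ha).2 (Finset.mem_filter.1 hb).2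
      · rw [Finset.disjoint_left]
        intro a ha hb
        exact (Finset.mem_filter.1 hb).2.1 (Finset.mem_filter.1 ha).2
    have hd2 : Disjoint (univ.filter fun u => G u v) N := by
      rw [Finset.disjoint_left]
      intro a ha hb
      exact (Finset.mem_filter.1 hb).2.2 (Finset.mem_filter.1 ha).2
    have := Finset.card_le_card (Finset.subset_univ
      ((univ.filter fun u => G v u) ∪ ((univ.filter fun u => G u v) ∪ N)))
    rw [Finset.card_union_of_disjoint hd, Finset.card_union_of_disjoint hd2,
      Finset.card_univ, Fintype.card_fin] at this
    rw [outDeg, inDeg, outDegOn, inDegOn]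
    omega
  omega

/-- generic injection of labelled cyclic triangles (two vertices in `A`, one outside)
into `cyc3 G A A Aᶜ`. -/
private lemma card_le_cyc3 {ι : Type*} [DecidableEq ι] (hirr : ∀ v, ¬ G v v)
    (hasym : ∀ a b : Fin n, G a b → ¬ G b a) (A : Finset (Fin n))
    (W : Finset ι) (fu fv fz : ι → Fin n)
    (hW : ∀ p ∈ W, fu p ∈ A ∧ fv p ∈ A ∧ fz p ∉ A ∧
      G (fu p) (fv p) ∧ G (fv p) (fz p) ∧ G (fz p) (fu p))
    (hinj : ∀ p ∈ W, ∀ q ∈ W, fu p = fu q → fv p = fv q → fz p = fz q → p = q) :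
    W.card ≤ cyc3 G A A Aᶜ := by
  classical
  refine Finset.card_le_card_of_injOn (fun p => ({fu p, fv p, fz p} : Finset (Fin n))) ?_ ?_
  · intro p hp
    obtain ⟨hu, hv, hz, g1, g2, g3⟩ := hW p hp
    have huv : fu p ≠ fv p := by rintro h; exact hirr _ (h ▸ g1)
    have huz : fu p ≠ fz p := by rintro h; exact hz (h ▸ hu)
    have hvz : fv p ≠ fz p := by rintro h; exact hz (h ▸ hv)
    rw [Finset.mem_coe, Finset.mem_filter]
    refine ⟨Finset.mem_powersetCard.2 ⟨Finset.subset_univ _, ?_⟩,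
      ⟨fu p, fv p, fz p, g1, g2, g3, rfl⟩,
      fu p, hu, fv p, hv, fz p, Finset.mem_compl.2 hz, rfl⟩
    rw [Finset.card_insert_of_notMem, Finset.card_insert_of_notMem, Finset.card_singleton]
    · simp [hvz]
    · simp [huv, huz]
  · intro p hp q hq h
    obtain ⟨hu, hv, hz, g1, g2, g3⟩ := hW p hp
    obtain ⟨hu', hv', hz', g1', g2', g3'⟩ := hW q hq
    simp only at h
    have hzq : fz q ∈ ({fu p, fv p, fz p} : Finset (Fin n)) := by rw [h]; simp
    have hzz : fz q = fz p := by
      simp only [Finset.mem_insert, Finset.mem_singleton] at hzq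
      rcases hzq with h1 | h1 | h1
      · exact absurd (h1 ▸ hu) hz'
      · exact absurd (h1 ▸ hv) hz'
      · exact h1
    have huq : fu q ∈ ({fu p, fv p, fz p} : Finset (Fin n)) := by rw [h]; simp
    simp only [Finset.mem_insert, Finset.mem_singleton] at huq
    have huu : fu q = fu p := by
      rcases huq with h1 | h1 | h1
      · exact h1
      · exfalso
        have hvq : fv q ∈ ({fu p, fv p, fz p} : Finset (Fin n)) := by rw [h]; simp
        simp only [Finset.mem_insert, Finset.mem_singleton] at hvq
        rcases hvq with h2 | h2 | h2
        · exact hasym _ _ g1 (h1 ▸ h2 ▸ g1')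
        · exact absurd g1' (by rw [h1, ← h2]; exact hirr _)
        · exact hz (h2 ▸ hv')
      · exact absurd (h1 ▸ hu') hz
    have hvv : fv q = fv p := by
      have hvq : fv q ∈ ({fu p, fv p, fz p} : Finset (Fin n)) := by rw [h]; simp
      simp only [Finset.mem_insert, Finset.mem_singleton] at hvq
      rcases hvq with h2 | h2 | h2
      · exact absurd g1' (by rw [huu, h2]; exact hirr _)
      · exact h2
      · exact absurd (h2 ▸ hv') hz
    exact hinj p hp q hq huu.symm hvv.symm hzz.symm

end stmt12helpers

set_option maxHeartbeats 2000000 in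
private lemma stmt12_numeric (β c α nn i o e r eii : ℝ)
    (hn1 : 1 ≤ nn) (hβ : 0 < β) (hβ1 : β ≤ 1) (hc : 0 < c) (hcβ : c ≤ β^5/1000)
    (hα : 0 < α) (hαβ : α ≤ β^5/1000) (hβ5β : β^5 ≤ β) (hβ4β : β^4 ≤ 1)
    (hi2 : β*nn/2 ≤ i) (ho2 : β*nn/2 ≤ o) (hin : i ≤ nn) (hon : o ≤ nn)
    (hrnn : 0 ≤ r) (henn : 0 ≤ e) (heii : 0 ≤ eii)
    (hEII : 2*eii ≤ i*i)
    (hER : i*(o - 2*c*nn) ≤ e + r)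
    (hEle : e ≤ i*o)
    (hR : r < β^4/1000 * nn^2)
    (hmain : e^2 ≤ o*(α*nn^3) + o^2*r + o^2*eii + 4*c*nn*e*o) : False := by
  have hn0 : (0:ℝ) < nn := by linarith
  have hc4 : c ≤ β/1000 := by linarith
  have hi0 : 0 < i := by nlinarith
  have ho0 : 0 < o := by nlinarith
  have hio : i*o ≤ nn^2 := by nlinarith
  have hb54 : β^5 ≤ β^4 := by nlinarith [pow_pos hβ 4]
  have hα4 : α ≤ β^4/1000 := by linarith
  have hc44 : c ≤ β^4/1000 := by linarith
  have hA1 : o*(α*nn^3) ≤ α*nn^4 := by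
    have h := mul_le_mul_of_nonneg_right hon (by positivity : (0:ℝ) ≤ α*nn^3)
    nlinarith [h]
  have hA2 : o^2*r ≤ (β^4/1000) * nn^4 := by
    have h1 : o^2 ≤ nn^2 := by nlinarith
    have h := mul_le_mul h1 hR.le hrnn (by positivity)
    nlinarith [h]
  have hA3 : o^2*eii ≤ (i*o)^2/2 := by
    have h := mul_le_mul_of_nonneg_left hEII (by positivity : (0:ℝ) ≤ o^2)
    nlinarith [h]
  have he2 : e ≤ nn^2 := le_trans hEle hio
  have hA4 : 4*c*nn*e*o ≤ 4*c*nn^4 := by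
    have h1 : e*o ≤ nn^2*nn := mul_le_mul he2 hon ho0.le (by positivity)
    have h := mul_le_mul_of_nonneg_left h1 (by positivity : (0:ℝ) ≤ 4*c*nn)
    nlinarith [h]
  have hB1 : i*o - (2*c + β^4/1000) * nn^2 ≤ e := by
    have h := mul_le_mul_of_nonneg_left hin (by positivity : (0:ℝ) ≤ 2*c*nn)
    nlinarith [h]
  have hB2 : (i*o)^2 - 2*((2*c + β^4/1000) * nn^2)*nn^2 ≤ e^2 := by
    have hd1 : i*o - e ≤ (2*c + β^4/1000) * nn^2 := by linarith
    have hd2 : i*o + e ≤ 2*nn^2 := by linarith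
    have hd0 : (0:ℝ) ≤ i*o - e := by linarith
    nlinarith [mul_le_mul hd1 hd2 (by linarith) (by positivity)]
  have hio2 : (β^4/16)*nn^4 ≤ (i*o)^2 := by
    have ht : β*nn/2*(β*nn/2) ≤ i*o := mul_le_mul hi2 ho2 (by positivity) hi0.le
    have h := mul_le_mul ht ht (by positivity) (mul_nonneg hi0.le ho0.le)
    nlinarith [h]
  have hcontr : (i*o)^2/2 ≤ (α + 8*c + 3*(β^4/1000)) * nn^4 := by linarith
  have hn4 : (0:ℝ) < nn^4 := by positivity
  have hb4 : (0:ℝ) < β^4 := by positivity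
  have hfin1 : α*nn^4 ≤ (β^4/1000)*nn^4 := mul_le_mul_of_nonneg_right hα4 hn4.le
  have hfin2 : c*nn^4 ≤ (β^4/1000)*nn^4 := mul_le_mul_of_nonneg_right hc44 hn4.le
  nlinarith [mul_pos hb4 hn4]

set_option maxHeartbeats 3000000 in
theorem stmt_12 :
    ∀ η : ℝ, 0 < η → η < 1 →
    ∃ ξ₀ > (0:ℝ), ∀ ξ : ℝ, 0 < ξ → ξ ≤ ξ₀ →
    ∃ β₀ > (0:ℝ), ∀ β : ℝ, 0 < β → β ≤ β₀ →
    ∃ α₀ > (0:ℝ), ∀ α : ℝ, 0 < α → α ≤ α₀ →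
    ∃ c₀ > (0:ℝ), ∀ c : ℝ, 0 < c → c ≤ c₀ →
    ∃ N : ℕ, ∀ n : ℕ, N ≤ n → ∀ G : Fin n → Fin n → Prop, IsOriented G →
      MinSemidegreeGE G ((1/2 - c) * n) →
      ∀ A : Finset (Fin n), η * n < (A.card : ℝ) → (cyc3 G A A Aᶜ : ℝ) ≤ α * n^3 →
        ((Aᶜ.filter fun x =>
            (inDegOn G x A : ℝ) < (A.card : ℝ) - β * n ∧
            (outDegOn G x A : ℝ) < (A.card : ℝ) - β * n).card : ℝ) ≤ β * n := by
  intro η hη hη1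
  refine ⟨1/8, by norm_num, ?_⟩
  intro ξ hξ hξ8
  refine ⟨ξ, hξ, ?_⟩
  intro β hβ hβξ
  refine ⟨β^5/1000, by positivity, ?_⟩
  intro α hα hαβ
  refine ⟨α, hα, ?_⟩
  intro c hc hcα
  refine ⟨1, ?_⟩
  intro n hn G hor hdeg A hA hcyc
  obtain ⟨hirr, hasym⟩ := hor
  have hn1 : (1:ℝ) ≤ (n:ℝ) := by exact_mod_cast hn
  have hn0 : (0:ℝ) < (n:ℝ) := by linarith
  have hβ8 : β ≤ 1/8 := le_trans hβξ hξ8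
  have hβ1 : β ≤ 1 := by linarith
  have hcβ : c ≤ β^5/1000 := le_trans hcα hαβ
  have hβ5β : β^5 ≤ β := by
    have h := pow_le_one₀ hβ.le hβ1 (n := 4)
    calc β^5 = β^4 * β := by ring
    _ ≤ 1 * β := mul_le_mul_of_nonneg_right h hβ.le
    _ = β := one_mul β
  have hβ4β : β^4 ≤ 1 := pow_le_one₀ hβ.le hβ1
  set S := Aᶜ.filter (fun x => (inDegOn G x A : ℝ) < (A.card : ℝ) - β * n ∧
      (outDegOn G x A : ℝ) < (A.card : ℝ) - β * n) with hSdef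
  have adjR : ∀ (v : Fin n) (B : Finset (Fin n)),
      (B.card : ℝ) - 2*c*n ≤ (outDegOn G v B : ℝ) + (inDegOn G v B : ℝ) := by
    intro v B
    have h := adjLB hasym v B
    have h1 := (hdeg v).1
    have h2 := (hdeg v).2
    have h' : ((B.card : ℝ)) + (outDeg G v : ℝ) + (inDeg G v : ℝ) ≤
        (outDegOn G v B : ℝ) + (inDegOn G v B : ℝ) + n := by exact_mod_cast h
    linarith
  by_cases hbig : ∀ x ∈ S, (β^4/1000) * (n:ℝ)^2 ≤
      ((((A.filter fun u => G x u) ×ˢ (A.filter fun u => G u x)).filter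
        fun p => G p.1 p.2).card : ℝ)
  · -- every vertex of S lies on many cyclic triangles through A; count them
    set W2 := S.sigma (fun x => ((A.filter fun u => G x u) ×ˢ (A.filter fun u => G u x)).filter
      fun p => G p.1 p.2) with hW2
    have hW2card : W2.card = ∑ x ∈ S, (((A.filter fun u => G x u) ×ˢ
        (A.filter fun u => G u x)).filter fun p => G p.1 p.2).card := Finset.card_sigma _ _
    have hW2le : W2.card ≤ cyc3 G A A Aᶜ := by
      refine card_le_cyc3 hirr hasym A W2 (fun p => p.2.1) (fun p => p.2.2) (fun p => p.1) ?_ ?_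
      · intro p hp
        rw [hW2, Finset.mem_sigma] at hp
        obtain ⟨hx, hpair⟩ := hp
        rw [Finset.mem_filter] at hpair
        obtain ⟨hmem, hG⟩ := hpair
        rw [Finset.mem_product] at hmem
        obtain ⟨h1, h2⟩ := hmem
        rw [Finset.mem_filter] at h1 h2
        have hxA : p.1 ∉ A := Finset.mem_compl.1 (Finset.mem_filter.1 hx).1
        exact ⟨h1.1, h2.1, hxA, hG, h2.2, h1.2⟩
      · intro p _ q _ h1 h2 h3
        rcases p with ⟨px, pb, pa⟩
        rcases q with ⟨qx, qb, qa⟩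
        simp only at h1 h2 h3
        subst h1; subst h2; subst h3; rfl
    have hlow : (S.card : ℝ) * ((β^4/1000) * (n:ℝ)^2) ≤ (W2.card : ℝ) := by
      have h1 : ∑ _x ∈ S, ((β^4/1000) * (n:ℝ)^2) ≤ ∑ x ∈ S, ((((A.filter fun u => G x u) ×ˢ
          (A.filter fun u => G u x)).filter fun p => G p.1 p.2).card : ℝ) :=
        Finset.sum_le_sum (fun x hx => hbig x hx)
      rw [Finset.sum_const, nsmul_eq_mul] at h1
      have h2 : (W2.card : ℝ) = ∑ x ∈ S, ((((A.filter fun u => G x u) ×ˢ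
          (A.filter fun u => G u x)).filter fun p => G p.1 p.2).card : ℝ) := by
        rw [hW2card]; push_cast; ring
      linarith
    have hup : (W2.card : ℝ) ≤ α * n^3 :=
      le_trans (by exact_mod_cast hW2le) hcyc
    have hK : (0:ℝ) < (β^4/1000) * (n:ℝ)^2 := by positivity
    have hfin : (S.card : ℝ) * ((β^4/1000) * (n:ℝ)^2) ≤ (β*n) * ((β^4/1000) * (n:ℝ)^2) := by
      have : (β*n) * ((β^4/1000) * (n:ℝ)^2) = (β^5/1000) * n^3 := by ring
      rw [this]
      have hn3 : (0:ℝ) ≤ (n:ℝ)^3 := by positivity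
      have h5 : α * (n:ℝ)^3 ≤ (β^5/1000) * (n:ℝ)^3 := mul_le_mul_of_nonneg_right hαβ hn3
      linarith only [hlow, hup, h5]
    exact le_of_mul_le_mul_right hfin hK
  · push_neg at hbig
    obtain ⟨x, hxS, hRlt⟩ := hbig
    rw [hSdef, Finset.mem_filter] at hxS
    obtain ⟨hxAc, hIlt, hOlt⟩ := hxS
    have hxA : x ∉ A := Finset.mem_compl.1 hxAc
    set I := A.filter (fun u => G u x) with hIdef
    set O := A.filter (fun u => G x u) with hOdef
    have hIcard : inDegOn G x A = I.card := rfl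
    have hOcard : outDegOn G x A = O.card := rfl
    have hIA : I ⊆ A := Finset.filter_subset _ _
    have hOA : O ⊆ A := Finset.filter_subset _ _
    have hOIdisj : Disjoint O I := by
      rw [Finset.disjoint_left]
      intro a ha hb
      exact hasym x a (Finset.mem_filter.1 ha).2 (Finset.mem_filter.1 hb).2
    have hiub : (I.card : ℝ) < (A.card : ℝ) - β*n := by rw [← hIcard]; exact hIlt
    have houb : (O.card : ℝ) < (A.card : ℝ) - β*n := by rw [← hOcard]; exact hOlt
    have hio : (A.card : ℝ) - 2*c*n ≤ (O.card : ℝ) + (I.card : ℝ) := by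
      have := adjR x A
      rw [hIcard, hOcard] at this
      linarith only [this]
    have hcβ4 : c ≤ β/4 := by linarith only [hcβ, hβ5β, hβ]
    have hcn : c*n ≤ (β/4)*n := mul_le_mul_of_nonneg_right hcβ4 hn0.le
    have hIlb : β*n/2 ≤ (I.card : ℝ) := by linarith only [hio, houb, hcn]
    have hOlb : β*n/2 ≤ (O.card : ℝ) := by linarith only [hio, hiub, hcn]
    have hIn : (I.card : ℝ) ≤ n := by
      have : I.card ≤ n := by simpa using Finset.card_le_univ I
      exact_mod_cast this
    have hOn : (O.card : ℝ) ≤ n := by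
      have : O.card ≤ n := by simpa using Finset.card_le_univ O
      exact_mod_cast this
    -- the few vertices of A not adjacent to x
    have hOIA : O ∪ I ⊆ A := Finset.union_subset hOA hIA
    have hDcard : ((A \ (O ∪ I)).card : ℝ) ≤ 2*c*n := by
      have h1 : (A \ (O ∪ I)).card + (O ∪ I).card = A.card :=
        Finset.card_sdiff_add_card_eq_card hOIA
      have h2 : (O ∪ I).card = O.card + I.card := Finset.card_union_of_disjoint hOIdisj
      have h3 : ((A \ (O ∪ I)).card : ℝ) + ((O.card : ℝ) + I.card) = A.card := by
        have h4 := congrArg (fun k : ℕ => (k : ℝ)) h1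
        push_cast [h2] at h4
        linarith
      linarith
    have hq : ∀ u : Fin n, (inDegOn G u A : ℝ) ≤
        (inDegOn G u O : ℝ) + (inDegOn G u I : ℝ) + 2*c*n := by
      intro u
      have hunion : (O ∪ I) ∪ (A \ (O ∪ I)) = A := Finset.union_sdiff_of_subset hOIA
      have h1 : inDegOn G u A = inDegOn G u (O ∪ I) + inDegOn G u (A \ (O ∪ I)) := by
        conv_lhs => rw [← hunion]
        exact degOn_union u Finset.disjoint_sdiff
      have h2 : inDegOn G u (O ∪ I) = inDegOn G u O + inDegOn G u I := degOn_union u hOIdisj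
      have h3 : inDegOn G u (A \ (O ∪ I)) ≤ (A \ (O ∪ I)).card :=
        Finset.card_le_card (Finset.filter_subset _ _)
      have h4 : (inDegOn G u A : ℝ) = (inDegOn G u O : ℝ) + (inDegOn G u I : ℝ) +
          (inDegOn G u (A \ (O ∪ I)) : ℝ) := by rw [h1, h2]; push_cast; ring
      have h5 : (inDegOn G u (A \ (O ∪ I)) : ℝ) ≤ ((A \ (O ∪ I)).card : ℝ) := by
        exact_mod_cast h3
      linarith only [h4, h5, hDcard]
    -- edge-count finsets
    set P := (I ×ˢ O).filter (fun p => G p.1 p.2) with hPdef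
    set Rf := (O ×ˢ I).filter (fun p => G p.1 p.2) with hRfdef
    set EII := (I ×ˢ I).filter (fun p => G p.1 p.2) with hEIIdef
    have hE1 : P.card = ∑ u ∈ I, outDegOn G u O := cardPF1 _ _ _
    have hE2 : P.card = ∑ v ∈ O, inDegOn G v I := cardPF2 _ _ _
    have hR1 : Rf.card = ∑ u ∈ I, inDegOn G u O := cardPF2 _ _ _
    have hEII_in : EII.card = ∑ u ∈ I, inDegOn G u I := cardPF2 _ _ _
    have hEII_out : EII.card = ∑ u ∈ I, outDegOn G u I := cardPF1 _ _ _
    have hEIIle : 2 * EII.card ≤ I.card * I.card := by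
      have hle : ∀ u ∈ I, outDegOn G u I + inDegOn G u I ≤ I.card :=
        fun u _ => degOn_add_le u I hasym
      calc 2 * EII.card = (∑ u ∈ I, outDegOn G u I) + ∑ u ∈ I, inDegOn G u I := by
            rw [← hEII_in, ← hEII_out]; ring
        _ = ∑ u ∈ I, (outDegOn G u I + inDegOn G u I) := Finset.sum_add_distrib.symm
        _ ≤ ∑ _u ∈ I, I.card := Finset.sum_le_sum hle
        _ = I.card * I.card := by rw [Finset.sum_const, smul_eq_mul]
    have hPsum : (P.card : ℝ) = ∑ u ∈ I, (outDegOn G u O : ℝ) := by rw [hE1]; push_cast; ring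
    have hPsum2 : (P.card : ℝ) = ∑ v ∈ O, (inDegOn G v I : ℝ) := by rw [hE2]; push_cast; ring
    have hRsum : (Rf.card : ℝ) = ∑ u ∈ I, (inDegOn G u O : ℝ) := by rw [hR1]; push_cast; ring
    have hEIIsum : (EII.card : ℝ) = ∑ u ∈ I, (inDegOn G u I : ℝ) := by
      rw [hEII_in]; push_cast; ring
    have hER : (I.card : ℝ) * ((O.card : ℝ) - 2*c*n) ≤ (P.card : ℝ) + (Rf.card : ℝ) := by
      have h1 : ∑ _u ∈ I, ((O.card : ℝ) - 2*c*n) ≤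
          ∑ u ∈ I, ((outDegOn G u O : ℝ) + (inDegOn G u O : ℝ)) :=
        Finset.sum_le_sum (fun u _ => adjR u O)
      rw [Finset.sum_const, nsmul_eq_mul, Finset.sum_add_distrib] at h1
      rw [hPsum, hRsum]
      linarith only [h1]
    have hEle : (P.card : ℝ) ≤ (I.card : ℝ) * (O.card : ℝ) := by
      have h1 : P.card ≤ (I ×ˢ O).card := Finset.card_filter_le _ _
      rw [Finset.card_product] at h1
      exact_mod_cast h1
    -- the triangles with the inner edge going from I to O
    set W1 := P.sigma (fun p => Aᶜ.filter fun z => G p.2 z ∧ G z p.1) with hW1def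
    have hW1card : W1.card = ∑ p ∈ P, (Aᶜ.filter fun z => G p.2 z ∧ G z p.1).card :=
      Finset.card_sigma _ _
    have hW1le : W1.card ≤ cyc3 G A A Aᶜ := by
      refine card_le_cyc3 hirr hasym A W1 (fun p => p.1.1) (fun p => p.1.2) (fun p => p.2) ?_ ?_
      · intro p hp
        rw [hW1def, Finset.mem_sigma] at hp
        obtain ⟨hpP, hz⟩ := hp
        rw [hPdef, Finset.mem_filter, Finset.mem_product] at hpP
        rw [Finset.mem_filter] at hz
        exact ⟨hIA hpP.1.1, hOA hpP.1.2, Finset.mem_compl.1 hz.1, hpP.2, hz.2.1, hz.2.2⟩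
      · intro p _ q _ h1 h2 h3
        rcases p with ⟨⟨pu, pv⟩, pz⟩
        rcases q with ⟨⟨qu, qv⟩, qz⟩
        simp only at h1 h2 h3
        subst h1; subst h2; subst h3; rfl
    -- pointwise lower bound for the number of completions of an inner edge
    have hwLB : ∀ u v : Fin n, (inDegOn G v A : ℝ) - (inDegOn G u A : ℝ) - 2*c*n ≤
        ((Aᶜ.filter fun z => G v z ∧ G z u).card : ℝ) := by
      intro u v
      have hfa : (Aᶜ.filter fun z => G v z ∧ G z u)
          = (Aᶜ.filter fun z => G v z) ∩ (Aᶜ.filter fun z => G z u) := Finset.filter_and _ _ _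
      have hig : (Aᶜ.filter fun z => G v z).card + (Aᶜ.filter fun z => G z u).card
          ≤ Aᶜ.card + ((Aᶜ.filter fun z => G v z) ∩ (Aᶜ.filter fun z => G z u)).card := by
        rw [← Finset.card_union_add_card_inter]
        exact Nat.add_le_add_right (Finset.card_le_card (Finset.union_subset
          (Finset.filter_subset _ _) (Finset.filter_subset _ _))) _
      have h1 : outDeg G v = outDegOn G v A + outDegOn G v Aᶜ := deg_split v A
      have h2 : inDeg G u = inDegOn G u A + inDegOn G u Aᶜ := deg_split' u A
      have h3 := (hdeg v).1
      have h4 := (hdeg u).2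
      have h5 : outDegOn G v A + inDegOn G v A ≤ A.card := degOn_add_le v A hasym
      have hAcard : A.card ≤ n := by simpa using Finset.card_le_univ A
      have hAc : (Aᶜ.card : ℝ) = (n:ℝ) - A.card := by
        rw [Finset.card_compl, Fintype.card_fin]
        push_cast [Nat.cast_sub hAcard]
        ring
      have e1 : ((Aᶜ.filter fun z => G v z).card : ℝ) = (outDeg G v : ℝ) - outDegOn G v A := by
        have : (Aᶜ.filter fun z => G v z).card = outDegOn G v Aᶜ := rfl
        rw [this, h1]; push_cast; ring
      have e2 : ((Aᶜ.filter fun z => G z u).card : ℝ) = (inDeg G u : ℝ) - inDegOn G u A := by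
        have : (Aᶜ.filter fun z => G z u).card = inDegOn G u Aᶜ := rfl
        rw [this, h2]; push_cast; ring
      have higR : ((Aᶜ.filter fun z => G v z).card : ℝ) + ((Aᶜ.filter fun z => G z u).card : ℝ)
          ≤ (Aᶜ.card : ℝ) +
            (((Aᶜ.filter fun z => G v z) ∩ (Aᶜ.filter fun z => G z u)).card : ℝ) := by
        exact_mod_cast hig
      have h5R : (outDegOn G v A : ℝ) + (inDegOn G v A : ℝ) ≤ (A.card : ℝ) := by
        exact_mod_cast h5
      rw [hfa]
      linarith
    -- expand the triangle count as a double sum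
    have hsplitW : (W1.card : ℝ) = ∑ u ∈ I, ∑ v ∈ O,
        (if G u v then ((Aᶜ.filter fun z => G v z ∧ G z u).card : ℝ) else 0) := by
      rw [hW1card]
      push_cast
      rw [hPdef, Finset.sum_filter, Finset.sum_product]
    have key : (∑ v ∈ O, (inDegOn G v I : ℝ) * (inDegOn G v A : ℝ))
        - (∑ u ∈ I, (outDegOn G u O : ℝ) * (inDegOn G u A : ℝ))
        - 2*c*n*(P.card : ℝ) ≤ (W1.card : ℝ) := by
      rw [hsplitW]
      have step2 : ∑ u ∈ I, ∑ v ∈ O,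
            (if G u v then ((inDegOn G v A : ℝ) - (inDegOn G u A : ℝ) - 2*c*n) else 0)
          ≤ ∑ u ∈ I, ∑ v ∈ O,
            (if G u v then ((Aᶜ.filter fun z => G v z ∧ G z u).card : ℝ) else 0) := by
        refine Finset.sum_le_sum fun u _ => Finset.sum_le_sum fun v _ => ?_
        split_ifs with hG
        · exact hwLB u v
        · exact le_rfl
      refine le_trans (le_of_eq ?_) step2
      have expand : ∀ u v : Fin n,
          (if G u v then ((inDegOn G v A : ℝ) - (inDegOn G u A : ℝ) - 2*c*n) else 0)
          = (if G u v then (inDegOn G v A : ℝ) else 0)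
            - (if G u v then (inDegOn G u A : ℝ) else 0)
            - (if G u v then 2*c*n else 0) := by
        intro u v; split_ifs <;> ring
      have ea : ∑ u ∈ I, ∑ v ∈ O, (if G u v then (inDegOn G v A : ℝ) else 0)
          = ∑ v ∈ O, (inDegOn G v I : ℝ) * (inDegOn G v A : ℝ) := by
        rw [Finset.sum_comm]
        refine Finset.sum_congr rfl fun v _ => ?_
        exact sumIte I (fun u => G u v) _
      have eb : ∑ u ∈ I, ∑ v ∈ O, (if G u v then (inDegOn G u A : ℝ) else 0)
          = ∑ u ∈ I, (outDegOn G u O : ℝ) * (inDegOn G u A : ℝ) := by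
        refine Finset.sum_congr rfl fun u _ => ?_
        exact sumIte O (fun v => G u v) _
      have ec : ∑ u ∈ I, ∑ v ∈ O, (if G u v then 2*c*n else 0) = (P.card : ℝ) * (2*c*n) := by
        have h1 : ∀ u ∈ I, ∑ v ∈ O, (if G u v then 2*c*n else 0)
            = (outDegOn G u O : ℝ) * (2*c*n) := fun u _ => sumIte O (fun v => G u v) _
        rw [Finset.sum_congr rfl h1, ← Finset.sum_mul, ← hPsum]
      calc (∑ v ∈ O, (inDegOn G v I : ℝ) * (inDegOn G v A : ℝ))
            - (∑ u ∈ I, (outDegOn G u O : ℝ) * (inDegOn G u A : ℝ)) - 2*c*n*(P.card : ℝ)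
          = (∑ u ∈ I, ∑ v ∈ O, (if G u v then (inDegOn G v A : ℝ) else 0))
            - (∑ u ∈ I, ∑ v ∈ O, (if G u v then (inDegOn G u A : ℝ) else 0))
            - (∑ u ∈ I, ∑ v ∈ O, (if G u v then 2*c*n else 0)) := by rw [ea, eb, ec]; ring
        _ = ∑ u ∈ I, ∑ v ∈ O,
            (if G u v then ((inDegOn G v A : ℝ) - (inDegOn G u A : ℝ) - 2*c*n) else 0) := by
            rw [← Finset.sum_sub_distrib, ← Finset.sum_sub_distrib]
            refine Finset.sum_congr rfl fun u _ => ?_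
            rw [← Finset.sum_sub_distrib, ← Finset.sum_sub_distrib]
            exact (Finset.sum_congr rfl fun v _ => (expand u v).symm)
    -- Cauchy–Schwarz
    have hCS : (P.card : ℝ)^2 ≤
        (O.card : ℝ) * ∑ v ∈ O, (inDegOn G v I : ℝ) * (inDegOn G v A : ℝ) := by
      have h2 := sq_sum_le_card_mul_sum_sq (s := O) (f := fun v => (inDegOn G v I : ℝ))
      have h3 : ∑ v ∈ O, ((inDegOn G v I : ℝ))^2
          ≤ ∑ v ∈ O, (inDegOn G v I : ℝ) * (inDegOn G v A : ℝ) := by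
        refine Finset.sum_le_sum fun v _ => ?_
        have hmono : (inDegOn G v I : ℝ) ≤ (inDegOn G v A : ℝ) := by
          exact_mod_cast inDegOn_mono v hIA
        have h0 : (0:ℝ) ≤ (inDegOn G v I : ℝ) := Nat.cast_nonneg _
        rw [sq]
        exact mul_le_mul_of_nonneg_left hmono h0
      calc (P.card : ℝ)^2 = (∑ v ∈ O, (inDegOn G v I : ℝ))^2 := by rw [hPsum2]
        _ ≤ (O.card : ℝ) * ∑ v ∈ O, ((inDegOn G v I : ℝ))^2 := h2
        _ ≤ (O.card : ℝ) * ∑ v ∈ O, (inDegOn G v I : ℝ) * (inDegOn G v A : ℝ) := by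
            have : (0:ℝ) ≤ (O.card : ℝ) := Nat.cast_nonneg _
            exact mul_le_mul_of_nonneg_left h3 this
    -- upper bound for the negative part
    have hSb : ∑ u ∈ I, (outDegOn G u O : ℝ) * (inDegOn G u A : ℝ) ≤
        (O.card : ℝ) * (Rf.card : ℝ) + (O.card : ℝ) * (EII.card : ℝ) + 2*c*n*(P.card : ℝ) := by
      have h1 : ∀ u ∈ I, (outDegOn G u O : ℝ) * (inDegOn G u A : ℝ) ≤
          (O.card : ℝ) * (inDegOn G u O : ℝ) + (O.card : ℝ) * (inDegOn G u I : ℝ)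
            + 2*c*n*(outDegOn G u O : ℝ) := by
        intro u _
        have ha := hq u
        have hb : (outDegOn G u O : ℝ) ≤ (O.card : ℝ) := by
          exact_mod_cast Finset.card_le_card (Finset.filter_subset _ O)
        have h0 : (0:ℝ) ≤ (outDegOn G u O : ℝ) := Nat.cast_nonneg _
        have h0' : (0:ℝ) ≤ (inDegOn G u O : ℝ) := Nat.cast_nonneg _
        have h0'' : (0:ℝ) ≤ (inDegOn G u I : ℝ) := Nat.cast_nonneg _
        linarith only [mul_le_mul_of_nonneg_left ha h0,
          mul_le_mul_of_nonneg_right hb h0', mul_le_mul_of_nonneg_right hb h0'']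
      have h2 := Finset.sum_le_sum h1
      have h3 : ∑ u ∈ I, ((O.card : ℝ) * (inDegOn G u O : ℝ) + (O.card : ℝ) * (inDegOn G u I : ℝ)
            + 2*c*n*(outDegOn G u O : ℝ))
          = (O.card : ℝ) * (Rf.card : ℝ) + (O.card : ℝ) * (EII.card : ℝ)
            + 2*c*n*(P.card : ℝ) := by
        rw [Finset.sum_add_distrib, Finset.sum_add_distrib, ← Finset.mul_sum, ← Finset.mul_sum,
          ← Finset.mul_sum, ← hRsum, ← hEIIsum, ← hPsum]
      linarith only [h2, h3]
    -- final numeric contradiction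
    exfalso
    have hW1R : (W1.card : ℝ) ≤ α * n^3 := le_trans (by exact_mod_cast hW1le) hcyc
    have hSaSb : (∑ v ∈ O, (inDegOn G v I : ℝ) * (inDegOn G v A : ℝ)) ≤
        α * n^3 + (∑ u ∈ I, (outDegOn G u O : ℝ) * (inDegOn G u A : ℝ))
          + 2*c*n*(P.card : ℝ) := by
      linarith only [key, hW1R]
    have hmain : (P.card : ℝ)^2 ≤ (O.card : ℝ)*(α*(n:ℝ)^3) + (O.card : ℝ)^2*(Rf.card : ℝ)
        + (O.card : ℝ)^2*(EII.card : ℝ) + 4*c*(n:ℝ)*(P.card : ℝ)*(O.card : ℝ) := by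
      have hOnn : (0:ℝ) ≤ (O.card : ℝ) := Nat.cast_nonneg _
      have h1 := mul_le_mul_of_nonneg_left hSaSb hOnn
      have h2 := mul_le_mul_of_nonneg_left hSb hOnn
      linarith only [hCS, h1, h2]
    have hEIIR : 2*(EII.card:ℝ) ≤ (I.card:ℝ)*(I.card:ℝ) := by exact_mod_cast hEIIle
    exact stmt12_numeric β c α n (I.card:ℝ) (O.card:ℝ) (P.card:ℝ) (Rf.card:ℝ) (EII.card:ℝ)
      hn1 hβ hβ1 hc hcβ hα hαβ hβ5β hβ4β hIlb hOlb hIn hOn (Nat.cast_nonneg _)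
      (Nat.cast_nonneg _) (Nat.cast_nonneg _) hEIIR hER hEle hRlt hmain
end

section
/- Suppose 0 < 1/n ≪ c ≪ α ≪ 1 and G is an oriented graph on n vertices with δ⁰(G) ≥ (1/2 - c)n. Then for every vertex v, the set of vertices y ≠ v such that v and y are (H(G), α, 1)-reachable has size at least (1/8 - 10α)n. -/
open Finset
open scoped Classical

lemma sum_card_filter' {α β : Type*} (S : Finset α) (T : Finset β) (R : α → β → Prop) :
    ∑ a ∈ S, (T.filter fun b => R a b).card
      = ((S ×ˢ T).filter fun p => R p.1 p.2).card := by
  rw [Finset.card_filter, Finset.sum_product]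
  congr 1
  ext a
  rw [Finset.card_filter]

lemma card_filter_swap' {α β : Type*} (S : Finset α) (T : Finset β) (R : α → β → Prop) :
    ((S ×ˢ T).filter fun p => R p.1 p.2).card
      = ((T ×ˢ S).filter fun p => R p.2 p.1).card := by
  apply Finset.card_bij' (fun p _ => p.swap) (fun p _ => p.swap) <;>
    simp +contextual [Finset.mem_filter, Finset.mem_product]

lemma sum_out_eq_sum_in' {V : Type*} (G : V → V → Prop) (S : Finset V) :
    ∑ x ∈ S, (S.filter fun z => G x z).card = ∑ x ∈ S, (S.filter fun z => G z x).card := by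
  rw [sum_card_filter' S S (fun a b => G a b), sum_card_filter' S S (fun a b => G b a),
    card_filter_swap']

lemma two_mul_sum_le' {V : Type*} (G : V → V → Prop) (hA : ∀ u v, G u v → ¬ G v u)
    (S : Finset V) :
    2 * ∑ x ∈ S, (S.filter fun z => G x z).card ≤ S.card * S.card := by
  classical
  have h2 : 2 * ∑ x ∈ S, (S.filter fun z => G x z).card
      = ∑ x ∈ S, ((S.filter fun z => G x z).card + (S.filter fun z => G z x).card) := by
    rw [Finset.sum_add_distrib, two_mul, sum_out_eq_sum_in' G S]
  rw [h2]
  calc ∑ x ∈ S, ((S.filter fun z => G x z).card + (S.filter fun z => G z x).card)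
      ≤ ∑ _x ∈ S, S.card := by
        apply Finset.sum_le_sum
        intro x _
        rw [← Finset.card_union_of_disjoint]
        · exact Finset.card_le_card (by intro z hz; simp at hz ⊢; tauto)
        · rw [Finset.disjoint_left]; intro z hz hz'
          simp at hz hz'
          exact hA _ _ hz.2 hz'.2
    _ = S.card * S.card := by rw [Finset.sum_const, smul_eq_mul]

lemma out_split' {V : Type*} [Fintype V] [DecidableEq V] (p : V → Prop) (S T : Finset V) :
    (univ.filter fun w => p w).card
      ≤ (S.filter fun w => p w).card + (T.filter fun w => p w).card + ((univ \ S) \ T).card := by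
  have hsub : univ.filter (fun w => p w)
      ⊆ ((S.filter fun w => p w) ∪ (T.filter fun w => p w)) ∪ ((univ \ S) \ T) := by
    intro w hw
    simp only [Finset.mem_filter, Finset.mem_union, Finset.mem_sdiff, Finset.mem_univ,
      true_and] at *
    tauto
  calc (univ.filter fun w => p w).card
      ≤ (((S.filter fun w => p w) ∪ (T.filter fun w => p w)) ∪ ((univ \ S) \ T)).card :=
        Finset.card_le_card hsub
    _ ≤ ((S.filter fun w => p w) ∪ (T.filter fun w => p w)).card + ((univ \ S) \ T).card :=
        Finset.card_union_le _ _
    _ ≤ (S.filter fun w => p w).card + (T.filter fun w => p w).card + ((univ \ S) \ T).card :=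
        Nat.add_le_add_right (Finset.card_union_le _ _) _

lemma sdiff_card_real' {V : Type*} [Fintype V] [DecidableEq V] (S T : Finset V)
    (hT : T ⊆ univ \ S) :
    (((univ \ S) \ T).card : ℝ) = (Fintype.card V : ℝ) - S.card - T.card := by
  rw [Finset.card_sdiff_of_subset hT, Nat.cast_sub (Finset.card_le_card hT),
      Finset.card_sdiff_of_subset (Finset.subset_univ S), Finset.card_univ,
      Nat.cast_sub (by simpa using Finset.card_le_univ S)]


lemma pup_arith (c n p S P : ℝ) (hc0 : 0 < c) (hc4 : c ≤ 1/10000) (hn : 0 ≤ n)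
    (hp : 0 ≤ p)
    (h1 : p*((1/2-c)*n) + p*((1/2-c)*n) - p*(n-p) ≤ 2*S)
    (h2 : P ≤ p*((1/2+c)*n) - S) : P ≤ (1/8+2*c)*n^2 := by
  nlinarith [sq_nonneg ((1/2+2*c)*n - p),
    mul_nonneg (mul_nonneg hc0.le (by linarith : (0:ℝ) ≤ 1 - 2*c)) (sq_nonneg n)]

lemma final_arith (α c n r : ℝ) (hα0 : 0 < α) (hα1 : α ≤ 1/100) (hc0 : 0 < c)
    (hcα : c ≤ α/100) (hαn : 100 ≤ α*n) (hn0 : 0 < n) (hr : 0 ≤ r)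
    (hkey : (1/64 - 3/4*c)*n^3 ≤ r*((1/8+2*c)*n^2) + n*(α*n^2) + (1/8+2*c)*n^2) :
    (1/8 - 10*α)*n ≤ r := by
  by_contra hcon
  push_neg at hcon
  have hc4 : c ≤ 1/10000 := by nlinarith
  have hMpos : (0:ℝ) < (1/8+2*c)*n^2 := mul_pos (by linarith) (pow_pos hn0 2)
  have hstep := mul_lt_mul_of_pos_right hcon hMpos
  have hn3 : (0:ℝ) ≤ n^3 := by positivity
  have hn2a : 100*n^2 ≤ α*n^3 := by
    calc 100*n^2 = n^2*100 := by ring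
      _ ≤ n^2*(α*n) := mul_le_mul_of_nonneg_left hαn (sq_nonneg _)
      _ = α*n^3 := by ring
  have hcn3 : c*n^3 ≤ (α/100)*n^3 := mul_le_mul_of_nonneg_right hcα hn3
  have hacn3 : (0:ℝ) ≤ α*c*n^3 := by positivity
  have hcn2 : c*n^2 ≤ (1/10000)*n^2 := mul_le_mul_of_nonneg_right hc4 (sq_nonneg _)
  nlinarith [hkey, hstep, hn2a, hcn3, hacn3, hcn2]

set_option maxHeartbeats 1000000 in
theorem stmt_15 :
    ∃ α₀ > (0:ℝ), ∀ α : ℝ, 0 < α → α ≤ α₀ →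
    ∃ c₀ > (0:ℝ), ∀ c : ℝ, 0 < c → c ≤ c₀ →
    ∃ N : ℕ, ∀ n : ℕ, N ≤ n → ∀ G : Fin n → Fin n → Prop, IsOriented G →
      MinSemidegreeGE G ((1/2 - c) * n) →
      ∀ v : Fin n,
        (1/8 - 10 * α) * n ≤
          (((univ : Finset (Fin n)).filter fun y =>
            y ≠ v ∧ α * (n : ℝ)^2 ≤ (linkCount G 1 v y : ℝ)).card : ℝ) := by
  refine ⟨1/100, by norm_num, fun α hα0 hα1 => ⟨α/100, by positivity, fun c hc0 hcα =>
    ⟨⌈(100:ℝ)/α⌉₊, fun n hn G hG hdeg v => ?_⟩⟩⟩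
  obtain ⟨hirr, hasym⟩ := hG
  have hc4 : c ≤ 1/10000 := by nlinarith
  have hnn : (0:ℝ) ≤ n := Nat.cast_nonneg n
  have hαn : 100 ≤ α * n := by
    have h1 : (100:ℝ)/α ≤ (⌈(100:ℝ)/α⌉₊ : ℝ) := Nat.le_ceil _
    have h2 : ((⌈(100:ℝ)/α⌉₊ : ℕ) : ℝ) ≤ n := Nat.cast_le.2 hn
    have h3 := le_trans h1 h2
    rw [div_le_iff₀ hα0] at h3
    nlinarith
  have hn0 : (0:ℝ) < n := by nlinarith
  -- degree facts
  have hout : ∀ u, (1/2 - c)*n ≤ ((univ.filter fun w => G u w).card : ℝ) := by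
    intro u
    have h := (hdeg u).1
    simpa [outDeg, outDegOn] using h
  have hin : ∀ u, (1/2 - c)*n ≤ ((univ.filter fun w => G w u).card : ℝ) := by
    intro u
    have h := (hdeg u).2
    simpa [inDeg, inDegOn] using h
  have hdisj : ∀ u : Fin n, Disjoint (univ.filter fun w => G u w)
      (univ.filter fun w => G w u) := by
    intro u
    rw [Finset.disjoint_left]
    intro w hw hw'
    simp only [Finset.mem_filter, Finset.mem_univ, true_and] at hw hw'
    exact hasym _ _ hw hw'
  have hsumdeg : ∀ u, ((univ.filter fun w => G u w).card : ℝ)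
      + ((univ.filter fun w => G w u).card : ℝ) ≤ n := by
    intro u
    have h := Finset.card_union_of_disjoint (hdisj u)
    have h2 : ((univ.filter fun w => G u w) ∪ (univ.filter fun w => G w u)).card ≤ n := by
      refine le_trans (Finset.card_le_univ _) ?_
      simp
    rw [h] at h2
    exact_mod_cast h2
  have hub : ∀ u, ((univ.filter fun w => G u w).card : ℝ) ≤ (1/2 + c)*n := by
    intro u
    have h1 := hsumdeg u
    have h2 := hin u
    linarith
  set A := univ.filter (fun x => G v x) with hAdef
  set B := univ.filter (fun z => G z v) with hBdef
  have hABd : Disjoint A B := hdisj v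
  have habR : (A.card:ℝ) + B.card ≤ n := hsumdeg v
  have haR : (1/2-c)*n ≤ (A.card:ℝ) := hout v
  have hbR : (1/2-c)*n ≤ (B.card:ℝ) := hin v
  have hapos : (0:ℝ) < (A.card:ℝ) := by nlinarith
  have haub : (A.card:ℝ) ≤ (1/2+c)*n := by linarith
  set Mc : Fin n → ℕ := fun x =>
    (((B.filter fun z => G x z) ×ˢ (univ.filter fun w => G w x)).filter
      fun p => G p.1 p.2).card with hMc
  set Pc : Fin n → ℕ := fun y =>
    (((A.filter fun x => G y x) ×ˢ (B.filter fun z => G z y)).filter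
      fun p => G p.1 p.2).card with hPc
  -- ite-sum representations
  have hPsum : ∀ y : Fin n, Pc y
      = ∑ x ∈ A, ∑ z ∈ B, if G y x ∧ G z y ∧ G x z then 1 else 0 := by
    intro y
    simp only [hPc]
    rw [Finset.card_filter, Finset.sum_product, Finset.sum_filter]
    refine Finset.sum_congr rfl fun x _ => ?_
    by_cases h1 : G y x
    · simp only [h1, if_true, true_and, Finset.sum_filter]
      refine Finset.sum_congr rfl fun z _ => ?_
      by_cases h2 : G z y <;> simp [h2]
    · simp [h1]
  have hMsum : ∀ x : Fin n, Mc x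
      = ∑ z ∈ B, ∑ w ∈ univ, if G x z ∧ G w x ∧ G z w then 1 else 0 := by
    intro x
    simp only [hMc]
    rw [Finset.card_filter, Finset.sum_product, Finset.sum_filter]
    refine Finset.sum_congr rfl fun z _ => ?_
    by_cases h1 : G x z
    · simp only [h1, if_true, true_and, Finset.sum_filter]
      refine Finset.sum_congr rfl fun w _ => ?_
      by_cases h2 : G w x <;> simp [h2]
    · simp [h1]
  have hxchg : ∑ y ∈ univ, Pc y = ∑ x ∈ A, Mc x := by
    calc ∑ y ∈ univ, Pc y
        = ∑ y ∈ univ, ∑ x ∈ A, ∑ z ∈ B, (if G y x ∧ G z y ∧ G x z then 1 else 0) :=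
          Finset.sum_congr rfl fun y _ => hPsum y
      _ = ∑ x ∈ A, ∑ y ∈ univ, ∑ z ∈ B, (if G y x ∧ G z y ∧ G x z then 1 else 0) :=
          Finset.sum_comm
      _ = ∑ x ∈ A, ∑ z ∈ B, ∑ y ∈ univ, (if G y x ∧ G z y ∧ G x z then 1 else 0) :=
          Finset.sum_congr rfl fun x _ => Finset.sum_comm
      _ = ∑ x ∈ A, ∑ z ∈ B, ∑ w ∈ univ, (if G x z ∧ G w x ∧ G z w then 1 else 0) := by
          refine Finset.sum_congr rfl fun x _ => Finset.sum_congr rfl fun z _ =>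
            Finset.sum_congr rfl fun w _ => ?_
          exact if_congr (by tauto) rfl rfl
      _ = ∑ x ∈ A, Mc x := Finset.sum_congr rfl fun x _ => (hMsum x).symm
  -- per-x lower bound: Mc x >= m(m/2 - 2cn) where m = |B ∩ N⁺(x)|
  have hMlow : ∀ x : Fin n, ((B.filter fun z => G x z).card : ℝ)
      * (((B.filter fun z => G x z).card : ℝ)/2 - 2*c*n) ≤ (Mc x : ℝ) := by
    intro x
    set Zx := B.filter fun z => G x z with hZx
    set Wx := univ.filter fun w => G w x with hWx
    have hMeqN : Mc x = ∑ z ∈ Zx, (Wx.filter fun w => G z w).card :=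
      (sum_card_filter' Zx Wx (fun z w => G z w)).symm
    have hMeq : (Mc x : ℝ) = ∑ z ∈ Zx, ((Wx.filter fun w => G z w).card : ℝ) := by
      rw [hMeqN]
      push_cast
      ring
    have hZsub : Zx ⊆ univ \ Wx := by
      intro z hz
      simp only [hZx, Finset.mem_filter] at hz
      simp only [hWx, Finset.mem_sdiff, Finset.mem_univ, true_and, Finset.mem_filter]
      exact hasym _ _ hz.2
    have hrest : (((univ \ Wx) \ Zx).card : ℝ) = n - Wx.card - Zx.card := by
      rw [sdiff_card_real' Wx Zx hZsub, Fintype.card_fin]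
    have hsplit : ∀ z ∈ Zx, ((univ.filter fun w => G z w).card : ℝ)
        ≤ ((Wx.filter fun w => G z w).card : ℝ) + ((Zx.filter fun w => G z w).card : ℝ)
          + (((univ \ Wx) \ Zx).card : ℝ) := by
      intro z _
      exact_mod_cast out_split' (fun w => G z w) Wx Zx
    have hsum1 : (Zx.card : ℝ) * ((1/2-c)*n)
        ≤ ∑ z ∈ Zx, ((univ.filter fun w => G z w).card : ℝ) := by
      have h := Finset.sum_le_sum (fun z (_ : z ∈ Zx) => hout z)
      rw [Finset.sum_const, nsmul_eq_mul] at h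
      linarith [h]
    have hsplitsum := Finset.sum_le_sum hsplit
    rw [Finset.sum_add_distrib, Finset.sum_add_distrib, Finset.sum_const, nsmul_eq_mul,
      hrest] at hsplitsum
    have hintN := two_mul_sum_le' G hasym Zx
    have hint : 2 * ∑ z ∈ Zx, ((Zx.filter fun w => G z w).card : ℝ)
        ≤ (Zx.card : ℝ) * Zx.card := by exact_mod_cast hintN
    have hWge : (1/2-c)*n ≤ (Wx.card : ℝ) := hin x
    have hZnn : (0:ℝ) ≤ (Zx.card : ℝ) := Nat.cast_nonneg _
    nlinarith [mul_nonneg hZnn (sub_nonneg.2 hWge), hMeq, hsum1, hsplitsum, hint]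
  -- E := number of A -> B edges
  set E := ∑ x ∈ A, ((B.filter fun z => G x z).card : ℝ) with hE
  have hElow : (1/8 - 3/2*c)*n^2 ≤ E := by
    have hBsub : B ⊆ univ \ A := by
      intro z hz
      simp only [Finset.mem_sdiff, Finset.mem_univ, true_and]
      exact fun hzA => (Finset.disjoint_left.1 hABd) hzA hz
    have hrest : (((univ \ A) \ B).card : ℝ) = n - A.card - B.card := by
      rw [sdiff_card_real' A B hBsub, Fintype.card_fin]
    have hsplit : ∀ x ∈ A, ((univ.filter fun w => G x w).card : ℝ)
        ≤ ((A.filter fun w => G x w).card : ℝ) + ((B.filter fun w => G x w).card : ℝ)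
          + (((univ \ A) \ B).card : ℝ) := by
      intro x _
      exact_mod_cast out_split' (fun w => G x w) A B
    have hsum1 : (A.card : ℝ) * ((1/2-c)*n)
        ≤ ∑ x ∈ A, ((univ.filter fun w => G x w).card : ℝ) := by
      have h := Finset.sum_le_sum (fun x (_ : x ∈ A) => hout x)
      rw [Finset.sum_const, nsmul_eq_mul] at h
      linarith [h]
    have hsplitsum := Finset.sum_le_sum hsplit
    rw [Finset.sum_add_distrib, Finset.sum_add_distrib, Finset.sum_const, nsmul_eq_mul,
      hrest] at hsplitsum
    have hintN := two_mul_sum_le' G hasym A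
    have hint : 2 * ∑ x ∈ A, ((A.filter fun w => G x w).card : ℝ)
        ≤ (A.card : ℝ) * A.card := by exact_mod_cast hintN
    have h1 : 0 ≤ (A.card:ℝ) * ((B.card:ℝ) - (1/2-c)*n) :=
      mul_nonneg hapos.le (by linarith)
    have h2 : 0 ≤ ((A.card:ℝ) - (1/2-c)*n) * (((A.card:ℝ) + (1/2-c)*n)/2 - 2*c*n) := by
      apply mul_nonneg (by linarith)
      nlinarith
    nlinarith [hsum1, hsplitsum, hint, h1, h2, mul_nonneg (mul_nonneg hc0.le hc0.le)
      (sq_nonneg (n:ℝ))]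
  set Q := ∑ x ∈ A, (Mc x : ℝ) with hQ
  have hQkey : E^2 - 4*c*n*(A.card:ℝ)*E ≤ 2*(A.card:ℝ)*Q := by
    set SS := ∑ x ∈ A, ((B.filter fun z => G x z).card : ℝ)^2 with hSS
    have hCS : E^2 ≤ SS * (A.card:ℝ) := by
      have h := Finset.sum_mul_sq_le_sq_mul_sq A
        (fun x => ((B.filter fun z => G x z).card : ℝ)) (fun _ => 1)
      have h' : (∑ x ∈ A, ((B.filter fun z => G x z).card : ℝ))^2
          ≤ (∑ x ∈ A, ((B.filter fun z => G x z).card : ℝ)^2) * (A.card:ℝ) := by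
        simpa using h
      calc E^2 = (∑ x ∈ A, ((B.filter fun z => G x z).card : ℝ))^2 := by rw [hE]
        _ ≤ (∑ x ∈ A, ((B.filter fun z => G x z).card : ℝ)^2) * (A.card:ℝ) := h'
        _ = SS * (A.card:ℝ) := by rw [hSS]
    have h5 : SS/2 - 2*c*n*E ≤ Q := by
      have hper : ∀ x ∈ A, ((B.filter fun z => G x z).card : ℝ)^2/2
          - 2*c*n*((B.filter fun z => G x z).card : ℝ) ≤ (Mc x : ℝ) := by
        intro x _
        nlinarith [hMlow x]
      have h := Finset.sum_le_sum hper
      rw [Finset.sum_sub_distrib] at h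
      rw [← Finset.sum_div, ← Finset.mul_sum] at h
      exact h
    have h6 : (A.card:ℝ) * (SS/2 - 2*c*n*E) ≤ (A.card:ℝ) * Q :=
      mul_le_mul_of_nonneg_left h5 hapos.le
    nlinarith [hCS, h6]
  have hQlow : (1/64 - 3/4*c)*n^3 ≤ Q := by
    have hE1nn : (0:ℝ) ≤ (1/8 - 3/2*c)*n^2 := by nlinarith [sq_nonneg (n:ℝ)]
    have hcn : (0:ℝ) ≤ c*n := mul_nonneg hc0.le hnn
    have h1 : 0 ≤ (E - (1/8 - 3/2*c)*n^2)
        * (E + (1/8 - 3/2*c)*n^2 - 4*(A.card:ℝ)*c*n) := by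
      apply mul_nonneg (by linarith [hElow])
      nlinarith [hElow, haub, hc4, sq_nonneg (n:ℝ), hcn, hc0.le]
    have h2 : 0 ≤ ((1/2+c)*n - (A.card:ℝ))
        * (4*c*n*((1/8 - 3/2*c)*n^2) + 2*((1/64 - 3/4*c)*n^3)) := by
      apply mul_nonneg (by linarith)
      have hn3 : (0:ℝ) ≤ (n:ℝ)^3 := by positivity
      nlinarith [hE1nn, hcn, hc4, hn3, mul_nonneg hcn (sq_nonneg (n:ℝ))]
    have hn4 : (0:ℝ) ≤ (n:ℝ)^4 := by positivity
    have h7 : 2*(A.card:ℝ)*((1/64 - 3/4*c)*n^3) ≤ 2*(A.card:ℝ)*Q := by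
      nlinarith [hQkey, h1, h2, mul_nonneg hc0.le hn4,
        mul_nonneg (mul_nonneg hc0.le hc0.le) hn4,
        mul_nonneg (mul_nonneg (mul_nonneg hc0.le hc0.le) hc0.le) hn4]
    have h8 : (0:ℝ) < 2*(A.card:ℝ) := by linarith
    exact le_of_mul_le_mul_left h7 h8
  -- per-y upper bound
  have hPup : ∀ y : Fin n, (Pc y : ℝ) ≤ (1/8 + 2*c)*n^2 := by
    intro y
    set X := A.filter (fun x => G y x) with hX
    set Zy := B.filter (fun z => G z y) with hZy
    have hXA : X ⊆ A := Finset.filter_subset _ _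
    have hZyB : Zy ⊆ B := Finset.filter_subset _ _
    have hXZ : Disjoint X Zy := hABd.mono hXA hZyB
    have hPeqN : Pc y = ∑ x ∈ X, (Zy.filter fun w => G x w).card :=
      (sum_card_filter' X Zy (fun x w => G x w)).symm
    have hPeq : (Pc y : ℝ) = ∑ x ∈ X, ((Zy.filter fun w => G x w).card : ℝ) := by
      rw [hPeqN]; push_cast; ring
    have hsplit : ∀ x ∈ X, ((Zy.filter fun w => G x w).card : ℝ)
        ≤ ((univ.filter fun w => G x w).card : ℝ)
          - ((X.filter fun w => G x w).card : ℝ) := by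
      intro x _
      have hdisjf : Disjoint (Zy.filter fun w => G x w) (X.filter fun w => G x w) :=
        (hXZ.symm).mono (Finset.filter_subset _ _) (Finset.filter_subset _ _)
      have hsub : (Zy.filter fun w => G x w) ∪ (X.filter fun w => G x w)
          ⊆ univ.filter fun w => G x w := by
        intro w hw
        simp only [Finset.mem_union, Finset.mem_filter, Finset.mem_univ, true_and] at hw ⊢
        tauto
      have h := Finset.card_le_card hsub
      rw [Finset.card_union_of_disjoint hdisjf] at h
      have h' : ((Zy.filter fun w => G x w).card : ℝ) + ((X.filter fun w => G x w).card : ℝ)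
          ≤ ((univ.filter fun w => G x w).card : ℝ) := by exact_mod_cast h
      linarith
    have hXcompl : ((univ \ X).card : ℝ) = n - X.card := by
      rw [Finset.card_sdiff_of_subset (Finset.subset_univ X), Finset.card_univ, Fintype.card_fin,
        Nat.cast_sub (by simpa using Finset.card_le_univ X)]
    have hper : ∀ x ∈ X, ((univ.filter fun w => G x w).card : ℝ)
        + ((univ.filter fun w => G w x).card : ℝ)
        ≤ (((X.filter fun w => G x w).card : ℝ) + ((X.filter fun w => G w x).card : ℝ))
          + ((n:ℝ) - X.card) := by
      intro x _
      have ho : (univ.filter fun w => G x w)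
          ⊆ (X.filter fun w => G x w) ∪ ((univ \ X).filter fun w => G x w) := by
        intro w hw
        simp only [Finset.mem_filter, Finset.mem_univ, true_and, Finset.mem_union,
          Finset.mem_sdiff] at hw ⊢
        by_cases hwX : w ∈ X <;> tauto
      have hi : (univ.filter fun w => G w x)
          ⊆ (X.filter fun w => G w x) ∪ ((univ \ X).filter fun w => G w x) := by
        intro w hw
        simp only [Finset.mem_filter, Finset.mem_univ, true_and, Finset.mem_union,
          Finset.mem_sdiff] at hw ⊢
        by_cases hwX : w ∈ X <;> tauto
      have hoi : Disjoint ((univ \ X).filter fun w => G x w)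
          ((univ \ X).filter fun w => G w x) := by
        rw [Finset.disjoint_left]
        intro w hw hw'
        simp only [Finset.mem_filter] at hw hw'
        exact hasym _ _ hw.2 hw'.2
      have hU : ((univ \ X).filter fun w => G x w) ∪ ((univ \ X).filter fun w => G w x)
          ⊆ univ \ X :=
        Finset.union_subset (Finset.filter_subset _ _) (Finset.filter_subset _ _)
      have h1 := le_trans (Finset.card_le_card ho) (Finset.card_union_le _ _)
      have h2 := le_trans (Finset.card_le_card hi) (Finset.card_union_le _ _)
      have h3 := Finset.card_le_card hU
      rw [Finset.card_union_of_disjoint hoi] at h3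
      have c1 : ((univ.filter fun w => G x w).card:ℝ)
          ≤ ((X.filter fun w => G x w).card:ℝ)
            + (((univ \ X).filter fun w => G x w).card:ℝ) := by exact_mod_cast h1
      have c2 : ((univ.filter fun w => G w x).card:ℝ)
          ≤ ((X.filter fun w => G w x).card:ℝ)
            + (((univ \ X).filter fun w => G w x).card:ℝ) := by exact_mod_cast h2
      have c3 : (((univ \ X).filter fun w => G x w).card:ℝ)
          + (((univ \ X).filter fun w => G w x).card:ℝ) ≤ (n:ℝ) - X.card := by
        rw [← hXcompl]; exact_mod_cast h3
      linarith
    have hpersum := Finset.sum_le_sum hper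
    rw [Finset.sum_add_distrib, Finset.sum_add_distrib, Finset.sum_add_distrib,
      Finset.sum_const, nsmul_eq_mul] at hpersum
    have heqio : ∑ x ∈ X, ((X.filter fun w => G w x).card : ℝ)
        = ∑ x ∈ X, ((X.filter fun w => G x w).card : ℝ) := by
      have h := sum_out_eq_sum_in' G X
      exact_mod_cast congrArg (fun k : ℕ => (k:ℝ)) h.symm
    have hdlow1 : (X.card:ℝ) * ((1/2-c)*n)
        ≤ ∑ x ∈ X, ((univ.filter fun w => G x w).card : ℝ) := by
      have h := Finset.sum_le_sum (fun x (_ : x ∈ X) => hout x)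
      rw [Finset.sum_const, nsmul_eq_mul] at h
      linarith
    have hdlow2 : (X.card:ℝ) * ((1/2-c)*n)
        ≤ ∑ x ∈ X, ((univ.filter fun w => G w x).card : ℝ) := by
      have h := Finset.sum_le_sum (fun x (_ : x ∈ X) => hin x)
      rw [Finset.sum_const, nsmul_eq_mul] at h
      linarith
    have hdub : ∑ x ∈ X, ((univ.filter fun w => G x w).card : ℝ)
        ≤ (X.card:ℝ) * ((1/2+c)*n) := by
      have h := Finset.sum_le_sum (fun x (_ : x ∈ X) => hub x)
      rw [Finset.sum_const, nsmul_eq_mul] at h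
      linarith
    have hsplitsum := Finset.sum_le_sum hsplit
    rw [Finset.sum_sub_distrib] at hsplitsum
    have hpX : (0:ℝ) ≤ (X.card:ℝ) := Nat.cast_nonneg _
    have h10 : (X.card:ℝ) * ((1/2-c)*n) + (X.card:ℝ) * ((1/2-c)*n)
        - (X.card:ℝ) * ((n:ℝ) - (X.card:ℝ))
        ≤ 2 * ∑ x ∈ X, ((X.filter fun w => G x w).card : ℝ) := by
      linarith [hpersum, heqio, hdlow1, hdlow2]
    have hfin : (Pc y : ℝ) ≤ (X.card:ℝ) * ((1/2+c)*n)
        - ∑ x ∈ X, ((X.filter fun w => G x w).card : ℝ) := by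
      linarith [hPeq, hsplitsum, hdub]
    exact pup_arith c n (X.card:ℝ) _ _ hc0 hc4 hnn hpX h10 hfin
  -- linking sets
  have hlink : ∀ y : Fin n, y ≠ v → Pc y ≤ linkCount G 1 v y := by
    intro y hyv
    simp only [hPc]
    unfold linkCount
    apply Finset.card_le_card_of_injOn (fun p => ({p.1, p.2} : Finset (Fin n)))
    · rintro ⟨x, z⟩ hp
      simp only [Finset.mem_coe, Finset.mem_filter, Finset.mem_product] at hp
      obtain ⟨⟨⟨hxA, hyx⟩, hzB, hzy⟩, hxz⟩ := hp
      have hvx : G v x := by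
        rw [hAdef] at hxA
        exact (Finset.mem_filter.1 hxA).2
      have hzv : G z v := by
        rw [hBdef] at hzB
        exact (Finset.mem_filter.1 hzB).2
      have hxz' : x ≠ z := fun h => hirr z (h ▸ hxz)
      have hvx' : v ≠ x := fun h => hirr x (h ▸ hvx)
      have hvz' : v ≠ z := fun h => hirr v (by rw [← h] at hzv; exact hzv)
      have hyx' : y ≠ x := fun h => hirr x (h ▸ hyx)
      have hyz' : y ≠ z := fun h => hirr z (by rw [h] at hzy; exact hzy)
      simp only [Finset.mem_coe, Finset.mem_filter, Finset.mem_powersetCard]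
      have hcard : ({x, z} : Finset (Fin n)).card = 2 := by
        rw [Finset.card_insert_of_notMem (by simp [hxz']), Finset.card_singleton]
      refine ⟨⟨Finset.subset_univ _, hcard.trans (by norm_num)⟩, ?_, ?_, ?_, ?_⟩
      · simp only [Finset.mem_insert, Finset.mem_singleton]
        push_neg
        exact ⟨hvx', hvz'⟩
      · simp only [Finset.mem_insert, Finset.mem_singleton]
        push_neg
        exact ⟨hyx', hyz'⟩
      · refine ⟨{insert v {x, z}}, ⟨fun s hs => ?_, fun s hs t ht hst => ?_⟩, by simp⟩
        · rw [Finset.mem_singleton] at hs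
          subst hs
          exact ⟨v, x, z, hvx, hxz, hzv, rfl⟩
        · rw [Finset.mem_singleton] at hs ht
          exact absurd (hs.trans ht.symm) hst
      · refine ⟨{insert y {x, z}}, ⟨fun s hs => ?_, fun s hs t ht hst => ?_⟩, by simp⟩
        · rw [Finset.mem_singleton] at hs
          subst hs
          exact ⟨y, x, z, hyx, hxz, hzy, rfl⟩
        · rw [Finset.mem_singleton] at hs ht
          exact absurd (hs.trans ht.symm) hst
    · rintro ⟨x, z⟩ hp ⟨x', z'⟩ hq heq
      simp only [Finset.coe_filter, Set.mem_setOf_eq, Finset.mem_product] at hp hq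
      obtain ⟨⟨hx, hz⟩, hxz⟩ := hp
      obtain ⟨⟨hx', hz'⟩, hxz'⟩ := hq
      have hvx : G v x := by
        have := (Finset.mem_filter.1 hx).1
        rw [hAdef] at this
        exact (Finset.mem_filter.1 this).2
      have hzv : G z v := by
        have := (Finset.mem_filter.1 hz).1
        rw [hBdef] at this
        exact (Finset.mem_filter.1 this).2
      have hvx2 : G v x' := by
        have := (Finset.mem_filter.1 hx').1
        rw [hAdef] at this
        exact (Finset.mem_filter.1 this).2
      have hzv2 : G z' v := by
        have := (Finset.mem_filter.1 hz').1
        rw [hBdef] at this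
        exact (Finset.mem_filter.1 this).2
      have heq2 : ({x, z} : Finset (Fin n)) = ({x', z'} : Finset (Fin n)) := heq
      have hxx : x = x' := by
        have hmem : x ∈ ({x', z'} : Finset (Fin n)) := by
          rw [← heq2]
          exact Finset.mem_insert_self _ _
        rcases Finset.mem_insert.1 hmem with h | h
        · exact h
        · rw [Finset.mem_singleton] at h
          exact absurd hzv2 (hasym v z' (h ▸ hvx))
      have hzz : z = z' := by
        have hmem : z ∈ ({x', z'} : Finset (Fin n)) := by
          rw [← heq2]
          exact Finset.mem_insert_of_mem (Finset.mem_singleton_self _)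
        rcases Finset.mem_insert.1 hmem with h | h
        · exact absurd hzv (hasym v z (h ▸ hvx2))
        · rw [Finset.mem_singleton] at h
          exact h
      exact Prod.ext hxx hzz
  -- assemble
  set s2 := univ.filter (fun y : Fin n =>
    ¬(y ≠ v ∧ α * (n:ℝ)^2 ≤ (linkCount G 1 v y : ℝ))) with hs2
  have hsplitQ : ∑ y ∈ univ.filter (fun y : Fin n =>
        y ≠ v ∧ α * (n:ℝ)^2 ≤ (linkCount G 1 v y : ℝ)), (Pc y : ℝ)
      + ∑ y ∈ s2, (Pc y : ℝ) = ∑ y ∈ univ, (Pc y : ℝ) :=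
    Finset.sum_filter_add_sum_filter_not univ _ _
  have hQy : ∑ y ∈ univ, (Pc y : ℝ) = Q := by
    have h' : ((∑ y ∈ univ, Pc y : ℕ) : ℝ) = ((∑ x ∈ A, Mc x : ℕ) : ℝ) := by
      exact_mod_cast hxchg
    push_cast at h'
    rw [hQ]
    exact h'
  have hb1 : ∑ y ∈ univ.filter (fun y : Fin n =>
        y ≠ v ∧ α * (n:ℝ)^2 ≤ (linkCount G 1 v y : ℝ)), (Pc y : ℝ)
      ≤ ((univ.filter (fun y : Fin n =>
        y ≠ v ∧ α * (n:ℝ)^2 ≤ (linkCount G 1 v y : ℝ))).card : ℝ) * ((1/8+2*c)*n^2) := by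
    have h := Finset.sum_le_sum (fun y (_ : y ∈ univ.filter (fun y : Fin n =>
        y ≠ v ∧ α * (n:ℝ)^2 ≤ (linkCount G 1 v y : ℝ))) => hPup y)
    rw [Finset.sum_const, nsmul_eq_mul] at h
    linarith
  have hMnn : (0:ℝ) ≤ (1/8+2*c)*n^2 := by positivity
  have hαn2 : (0:ℝ) ≤ α * (n:ℝ)^2 := by positivity
  have hb2 : ∑ y ∈ s2, (Pc y : ℝ) ≤ (n:ℝ) * (α*(n:ℝ)^2) + (1/8+2*c)*n^2 := by
    have hper : ∀ y ∈ s2, (Pc y : ℝ)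
        ≤ α*(n:ℝ)^2 + (if y = v then (1/8+2*c)*(n:ℝ)^2 else 0) := by
      intro y hy
      rw [hs2, Finset.mem_filter] at hy
      by_cases hyv : y = v
      · rw [if_pos hyv]
        linarith [hPup y]
      · rw [if_neg hyv]
        have hnl : ¬ (α * (n:ℝ)^2 ≤ (linkCount G 1 v y : ℝ)) := by tauto
        push_neg at hnl
        have hcast : (Pc y : ℝ) ≤ (linkCount G 1 v y : ℝ) := by
          exact_mod_cast hlink y hyv
        linarith
    have h := Finset.sum_le_sum hper
    rw [Finset.sum_add_distrib, Finset.sum_const, nsmul_eq_mul,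
      Finset.sum_ite_eq' s2 v] at h
    have hs2n : (s2.card : ℝ) ≤ n := by
      have h2 : s2.card ≤ n := by
        rw [hs2]
        exact le_trans (Finset.card_filter_le _ _) (by simp)
      exact_mod_cast h2
    have hif : (if v ∈ s2 then (1/8+2*c)*(n:ℝ)^2 else 0) ≤ (1/8+2*c)*(n:ℝ)^2 := by
      split
      · exact le_rfl
      · exact hMnn
    have hmul := mul_le_mul_of_nonneg_right hs2n hαn2
    linarith
  have hkey : (1/64 - 3/4*c)*(n:ℝ)^3
      ≤ ((univ.filter (fun y : Fin n =>
          y ≠ v ∧ α * (n:ℝ)^2 ≤ (linkCount G 1 v y : ℝ))).card : ℝ) * ((1/8+2*c)*n^2)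
        + (n:ℝ)*(α*(n:ℝ)^2) + (1/8+2*c)*(n:ℝ)^2 := by
    linarith [hQlow, hQy, hsplitQ, hb1, hb2]
  exact final_arith α c n _ hα0 hα1 hc0 hcα hαn hn0 (Nat.cast_nonneg _) hkey
end

section
/- Suppose 0 < 1/n ≪ c ≪ α ≪ 1, n is divisible by 3, and G is an oriented graph on n vertices with δ⁰(G) ≥ (1/2 - c)n. Let U₀ ⊆ V(G) with |U₀| ≤ αn. Then there exists a collection C of vertex-disjoint cyclic triangles of G with |V(C)| ≤ 3|U₀| such that U₀ ⊆ V(C). -/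
open Finset
open scoped Classical

lemma key {n : ℕ} {G : Fin n → Fin n → Prop} (hor : IsOriented G)
    {c : ℝ} (hc : 0 < c) (hc' : c ≤ 1/100)
    (hmin : MinSemidegreeGE G ((1/2 - c) * n))
    (F : Finset (Fin n)) (hF : (F.card : ℝ) ≤ n / 12) (hn : 0 < n)
    (v : Fin n) :
    ∃ b c', G v b ∧ G b c' ∧ G c' v ∧ b ∉ F ∧ c' ∉ F := by
  classical
  set A : Finset (Fin n) := (univ.filter fun b => G v b) \ F with hAdef
  set B : Finset (Fin n) := (univ.filter fun b => G b v) \ F with hBdef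
  have hmemA : ∀ x, x ∈ A ↔ G v x ∧ x ∉ F := by
    intro x; simp [hAdef, and_comm]
  have hmemB : ∀ x, x ∈ B ↔ G x v ∧ x ∉ F := by
    intro x; simp [hBdef, and_comm]
  by_contra h
  push_neg at h
  have hAB : ∀ a ∈ A, ∀ b ∈ B, ¬ G a b := by
    intro a ha b hb hab
    obtain ⟨hva, haF⟩ := (hmemA a).1 ha
    obtain ⟨hbv, hbF⟩ := (hmemB b).1 hb
    exact hbF (h a b hva hab hbv haF)
  -- disjointness of A and B
  have hABdisj : Disjoint A B := by
    rw [Finset.disjoint_left]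
    intro x hx hx'
    exact hor.2 v x ((hmemA x).1 hx).1 ((hmemB x).1 hx').1
  -- cardinality lower bounds
  have houtv : (1/2 - c) * n ≤ (outDeg G v : ℝ) := (hmin v).1
  have hinv : (1/2 - c) * n ≤ (inDeg G v : ℝ) := (hmin v).2
  have hAcard : (1/2 - c) * n - n/12 ≤ (A.card : ℝ) := by
    have h1 : (univ.filter fun b => G v b).card - F.card ≤ A.card :=
      Finset.le_card_sdiff F _
    have h2 : ((univ.filter fun b => G v b).card : ℝ) - F.card ≤ (A.card : ℝ) := by
      have h2a : ((univ.filter fun b => G v b).card : ℝ) ≤ A.card + F.card := by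
        have h3 : (univ.filter fun b => G v b) ⊆ A ∪ F := by
          intro x hx
          by_cases hxF : x ∈ F
          · exact Finset.mem_union_right _ hxF
          · exact Finset.mem_union_left _ (by simp [hAdef, hx, hxF])
        calc ((univ.filter fun b => G v b).card : ℝ) ≤ ((A ∪ F).card : ℝ) := by
              exact_mod_cast Finset.card_le_card h3
          _ ≤ A.card + F.card := by exact_mod_cast Finset.card_union_le A F
      linarith [h2a]
    have : (outDeg G v : ℝ) = ((univ.filter fun b => G v b).card : ℝ) := rfl
    linarith
  have hBcard : (1/2 - c) * n - n/12 ≤ (B.card : ℝ) := by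
    have : ((univ.filter fun b => G b v).card : ℝ) ≤ B.card + F.card := by
      have h3 : (univ.filter fun b => G b v) ⊆ B ∪ F := by
        intro x hx
        by_cases hxF : x ∈ F
        · exact Finset.mem_union_right _ hxF
        · exact Finset.mem_union_left _ (by simp [hBdef, hx, hxF])
      calc ((univ.filter fun b => G b v).card : ℝ) ≤ ((B ∪ F).card : ℝ) := by
            exact_mod_cast Finset.card_le_card h3
        _ ≤ B.card + F.card := by exact_mod_cast Finset.card_union_le B F
    have h4 : (inDeg G v : ℝ) = ((univ.filter fun b => G b v).card : ℝ) := rfl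
    linarith
  have hApos : (0:ℝ) < A.card := by
    have hn' : (1:ℝ) ≤ n := by exact_mod_cast hn
    nlinarith
  -- edges within A
  set S : Finset (Fin n × Fin n) := (A ×ˢ A).filter (fun p => G p.1 p.2) with hSdef
  have hSsub : S ⊆ A ×ˢ A := Finset.filter_subset _ _
  have hS2 : 2 * S.card ≤ A.card * A.card := by
    have hswap : S.card ≤ ((A ×ˢ A) \ S).card := by
      apply Finset.card_le_card_of_injOn Prod.swap
      · intro p hp
        rw [Finset.mem_coe, Finset.mem_sdiff]
        rw [Finset.mem_coe, hSdef, Finset.mem_filter, Finset.mem_product] at hp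
        constructor
        · rw [Finset.mem_product]; exact ⟨hp.1.2, hp.1.1⟩
        · rw [hSdef, Finset.mem_filter]
          rintro ⟨-, hG⟩
          exact hor.2 _ _ hp.2 hG
      · exact Prod.swap_injective.injOn
    have := Finset.card_sdiff_of_subset hSsub
    have hle : S.card ≤ (A ×ˢ A).card := Finset.card_le_card hSsub
    rw [Finset.card_product] at this hle
    omega
  have hsum : ∑ a ∈ A, (A.filter fun b => G a b).card = S.card := by
    rw [Finset.card_eq_sum_card_fiberwise (f := Prod.fst) (t := A)
      (fun p hp => (Finset.mem_product.1 (hSsub hp)).1)]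
    refine Finset.sum_congr rfl fun a ha => ?_
    refine Finset.card_bij' (fun b _ => (a, b)) (fun p _ => p.2) ?_ ?_ ?_ ?_
    · intro b hb
      rw [Finset.mem_filter] at hb ⊢
      exact ⟨Finset.mem_filter.2 ⟨Finset.mem_product.2 ⟨ha, hb.1⟩, hb.2⟩, rfl⟩
    · intro p hp
      rw [Finset.mem_filter] at hp
      have hp1 := hp.1
      rw [hSdef, Finset.mem_filter, Finset.mem_product] at hp1
      rw [Finset.mem_filter]
      refine ⟨hp1.1.2, ?_⟩
      exact hp.2 ▸ hp1.2
    · intro b hb; rfl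
    · intro p hp
      rw [Finset.mem_filter] at hp
      exact Prod.ext hp.2.symm rfl
  -- bound on out-degrees of vertices in A
  have hdegA : ∀ a ∈ A, outDeg G a ≤ (A.filter fun b => G a b).card + (n - A.card - B.card) := by
    intro a ha
    have hsub : (univ.filter fun b => G a b) ⊆ (A.filter fun b => G a b) ∪ (univ \ (A ∪ B)) := by
      intro x hx
      rw [Finset.mem_filter] at hx
      by_cases hxA : x ∈ A
      · exact Finset.mem_union_left _ (Finset.mem_filter.2 ⟨hxA, hx.2⟩)
      · refine Finset.mem_union_right _ ?_
        rw [Finset.mem_sdiff, Finset.mem_union]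
        refine ⟨Finset.mem_univ _, ?_⟩
        rintro (h1 | h1)
        · exact hxA h1
        · exact hAB a ha x h1 hx.2
    have h1 : outDeg G a ≤ (A.filter fun b => G a b).card + (univ \ (A ∪ B)).card := by
      calc outDeg G a = (univ.filter fun b => G a b).card := rfl
        _ ≤ ((A.filter fun b => G a b) ∪ (univ \ (A ∪ B))).card := Finset.card_le_card hsub
        _ ≤ _ := Finset.card_union_le _ _
    have h2 : (univ \ (A ∪ B)).card = n - A.card - B.card := by
      rw [Finset.card_sdiff_of_subset (Finset.subset_univ _), Finset.card_union_of_disjoint hABdisj]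
      simp [Nat.sub_sub]
    omega
  -- sum it up
  have hsumdeg : (A.card : ℝ) * ((1/2 - c) * n) ≤ ∑ a ∈ A, (outDeg G a : ℝ) := by
    calc (A.card:ℝ) * ((1/2 - c)*n) = ∑ _a ∈ A, ((1/2 - c)*(n:ℝ)) := by
          rw [Finset.sum_const, nsmul_eq_mul]
      _ ≤ ∑ a ∈ A, (outDeg G a : ℝ) := Finset.sum_le_sum fun a _ => (hmin a).1
  have hABn : A.card + B.card ≤ n := by
    have h1 := Finset.card_le_univ (A ∪ B)
    rw [Finset.card_union_of_disjoint hABdisj] at h1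
    simpa using h1
  have hupper : ∑ a ∈ A, (outDeg G a : ℝ) ≤ S.card + A.card * ((n:ℝ) - A.card - B.card) := by
    have h1 : ∑ a ∈ A, (outDeg G a) ≤ ∑ a ∈ A, ((A.filter fun b => G a b).card + (n - A.card - B.card)) :=
      Finset.sum_le_sum hdegA
    rw [Finset.sum_add_distrib, hsum, Finset.sum_const, smul_eq_mul] at h1
    have h2 : ((A.card * (n - A.card - B.card) : ℕ) : ℝ) = A.card * ((n:ℝ) - A.card - B.card) := by
      push_cast [Nat.sub_sub]
      rw [Nat.cast_sub (by omega)]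
      push_cast
      ring
    calc ∑ a ∈ A, (outDeg G a : ℝ) = ((∑ a ∈ A, outDeg G a : ℕ) : ℝ) := by push_cast; ring
      _ ≤ ((S.card + A.card * (n - A.card - B.card) : ℕ) : ℝ) := by exact_mod_cast h1
      _ = S.card + A.card * ((n:ℝ) - A.card - B.card) := by push_cast [← h2]; ring
  have hS2' : (2:ℝ) * S.card ≤ (A.card:ℝ) * A.card := by exact_mod_cast hS2
  have hnR : (0:ℝ) < n := by exact_mod_cast hn
  nlinarith [hApos, hAcard, hBcard, hsumdeg, hupper, hS2', mul_pos hApos hnR]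

lemma greedy {n : ℕ} {G : Fin n → Fin n → Prop} (hor : IsOriented G)
    {c : ℝ} (hc : 0 < c) (hc' : c ≤ 1/100)
    (hmin : MinSemidegreeGE G ((1/2 - c) * n)) (hn : 0 < n) :
    ∀ k : ℕ, ∀ U₀ : Finset (Fin n), U₀.card ≤ k → (3 * U₀.card : ℝ) ≤ n / 12 →
      ∃ C : Finset (Finset (Fin n)), IsCycTiling G C ∧
        (C.biUnion id).card ≤ 3 * U₀.card ∧ U₀ ⊆ C.biUnion id := by
  intro k
  induction k with
  | zero =>
    intro U₀ hcard _
    have : U₀ = ∅ := Finset.card_eq_zero.1 (Nat.le_zero.1 hcard)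
    subst this
    exact ⟨∅, ⟨fun s hs => absurd hs (Finset.notMem_empty s),
      fun s hs => absurd hs (Finset.notMem_empty s)⟩, by simp, by simp⟩
  | succ k ih =>
    intro U₀ hcard hsize
    by_cases hU : U₀ = ∅
    · subst hU
      exact ⟨∅, ⟨fun s hs => absurd hs (Finset.notMem_empty s),
        fun s hs => absurd hs (Finset.notMem_empty s)⟩, by simp, by simp⟩
    obtain ⟨v, hv⟩ := Finset.nonempty_iff_ne_empty.2 hU
    have hUpos : 1 ≤ U₀.card := Finset.card_pos.2 ⟨v, hv⟩
    have herase : (U₀.erase v).card = U₀.card - 1 := Finset.card_erase_of_mem hv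
    have hecard : (U₀.erase v).card ≤ k := by omega
    have hesize : (3 * (U₀.erase v).card : ℝ) ≤ n / 12 := by
      have : ((U₀.erase v).card : ℝ) ≤ (U₀.card : ℝ) := by
        exact_mod_cast Finset.card_le_card (Finset.erase_subset _ _)
      linarith
    obtain ⟨C', hC'til, hC'card, hC'cov⟩ := ih (U₀.erase v) hecard hesize
    by_cases hvC : v ∈ C'.biUnion id
    · refine ⟨C', hC'til, ?_, ?_⟩
      · calc (C'.biUnion id).card ≤ 3 * (U₀.erase v).card := hC'card
          _ ≤ 3 * U₀.card := by omega
      · intro u hu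
        by_cases huv : u = v
        · subst huv; exact hvC
        · exact hC'cov (Finset.mem_erase.2 ⟨huv, hu⟩)
    · set F := C'.biUnion id with hFdef
      have hFR : (F.card : ℝ) ≤ n / 12 := by
        have h1 : (F.card : ℝ) ≤ 3 * (U₀.erase v).card := by exact_mod_cast hC'card
        have h2 : ((U₀.erase v).card : ℝ) ≤ (U₀.card : ℝ) := by
          exact_mod_cast Finset.card_le_card (Finset.erase_subset _ _)
        linarith
      obtain ⟨b, c', hvb, hbc, hcv, hbF, hcF⟩ := key hor hc hc' hmin F hFR hn v
      set s : Finset (Fin n) := {v, b, c'} with hsdef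
      have hsnotin : ∀ x ∈ s, x ∉ F := by
        intro x hx
        rw [hsdef] at hx
        simp only [Finset.mem_insert, Finset.mem_singleton] at hx
        rcases hx with rfl | rfl | rfl
        · exact hvC
        · exact hbF
        · exact hcF
      have hdisj : ∀ t ∈ C', Disjoint s t := by
        intro t ht
        rw [Finset.disjoint_left]
        intro x hx hxt
        exact hsnotin x hx (Finset.mem_biUnion.2 ⟨t, ht, hxt⟩)
      have hsC' : s ∉ C' := by
        intro hmem
        exact hsnotin v (by simp [hsdef]) (Finset.mem_biUnion.2 ⟨s, hmem, by simp [hsdef]⟩)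
      refine ⟨insert s C', ⟨?_, ?_⟩, ?_, ?_⟩
      · intro t ht
        rcases Finset.mem_insert.1 ht with rfl | ht'
        · exact ⟨v, b, c', hvb, hbc, hcv, rfl⟩
        · exact hC'til.1 t ht'
      · intro t₁ h₁ t₂ h₂ hne
        rcases Finset.mem_insert.1 h₁ with rfl | h₁' <;>
          rcases Finset.mem_insert.1 h₂ with rfl | h₂'
        · exact absurd rfl hne
        · exact hdisj t₂ h₂'
        · exact (hdisj t₁ h₁').symm
        · exact hC'til.2 t₁ h₁' t₂ h₂' hne
      · rw [Finset.biUnion_insert]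
        calc (s ∪ C'.biUnion id).card ≤ s.card + (C'.biUnion id).card :=
              Finset.card_union_le _ _
          _ ≤ 3 + 3 * (U₀.erase v).card := by
              have : s.card ≤ 3 := by
                rw [hsdef]
                exact (Finset.card_insert_le _ _).trans
                  (Nat.add_le_add_right Finset.card_le_two 1)
              have hi : (C'.biUnion id).card ≤ 3 * (U₀.erase v).card := hC'card
              omega
          _ ≤ 3 * U₀.card := by omega
      · intro u hu
        rw [Finset.biUnion_insert]
        by_cases huv : u = v
        · subst huv
          exact Finset.mem_union_left _ (by simp [hsdef])
        · exact Finset.mem_union_right _ (hC'cov (Finset.mem_erase.2 ⟨huv, hu⟩))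

theorem stmt_18 :
    ∃ α₀ > (0:ℝ), ∀ α : ℝ, 0 < α → α ≤ α₀ →
    ∃ c₀ > (0:ℝ), ∀ c : ℝ, 0 < c → c ≤ c₀ →
    ∃ N : ℕ, ∀ n : ℕ, N ≤ n → 3 ∣ n → ∀ G : Fin n → Fin n → Prop, IsOriented G →
      MinSemidegreeGE G ((1/2 - c) * n) →
      ∀ U₀ : Finset (Fin n), (U₀.card : ℝ) ≤ α * n →
        ∃ C : Finset (Finset (Fin n)), IsCycTiling G C ∧
          (C.biUnion id).card ≤ 3 * U₀.card ∧ U₀ ⊆ C.biUnion id := by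
  refine ⟨1/36, by norm_num, fun α hα hα36 => ⟨1/100, by norm_num,
    fun c hc hc100 => ⟨1, fun n hn _ G hor hmin U₀ hU => ?_⟩⟩⟩
  have hn' : 0 < n := hn
  have hnR : (0:ℝ) ≤ n := by positivity
  have hsize : (3 * U₀.card : ℝ) ≤ n / 12 := by nlinarith
  exact greedy hor hc hc100 hmin hn' U₀.card U₀ le_rfl hsize
end
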